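/- arXiv:2003.13539 — 6 statements merged into one kernel-verified Lean document; each statement's English description precedes it below -/
import Mathlib

section
/- For every u₀ ∈ (0,1) there exists A₀ > 0 such that for all real parameters a, b, c with a > 0, 0 < b < 1, −b < c < a, ab ≥ A₀, and |c| < b·exp(−2π√(ab) − M(u₀)), the equation F_{a,b,c}(u) = 2π has a unique solution u_S in the interval (|c|/b, u₀), and this solution satisfies |c|/b < u_S < exp(−2π√(ab) + M(u₀)). In particular, u_S → 0 as ab → +∞. -/
open Real MeasureTheory intervalIntegral

/-- The Abelian integral `F_{a,b,c}(u) = ∫_u^1 (1−bx)/√(x(1−x)(a+bx)(c+bx)) dx`. -/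
noncomputable def F (a b c u : ℝ) : ℝ :=
  ∫ x in u..1, (1 - b * x) / Real.sqrt (x * (1 - x) * (a + b * x) * (c + b * x))

/-- The bound function `M(u₀) = 2·ln(1+√2)/√(1−u₀) + 2·ln 2`. -/
noncomputable def M (u₀ : ℝ) : ℝ :=
  2 * Real.log (1 + Real.sqrt 2) / Real.sqrt (1 - u₀) + 2 * Real.log 2

open Set


lemma FPintSqrt (u : ℝ) (hu : u ≤ 1) :
    IntervalIntegrable (fun x => 1 / Real.sqrt (1 - x)) volume u 1 := by
  have h0 : IntervalIntegrable (fun x : ℝ => x ^ (-(1/2) : ℝ)) volume (1 - u) (1 - 1) :=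
    (intervalIntegrable_rpow' (by norm_num)).symm
  have h1 : IntervalIntegrable (fun x : ℝ => (1 - x) ^ (-(1/2) : ℝ)) volume u 1 := by
    simpa using h0.comp_sub_left 1
  refine h1.mono_fun ?_ ?_
  · exact (measurable_const.div
      (Real.continuous_sqrt.comp (continuous_const.sub continuous_id)).measurable).aestronglyMeasurable
  · rw [Set.uIoc_of_le hu]
    refine (ae_restrict_iff' measurableSet_Ioc).mpr (Filter.Eventually.of_forall ?_)
    intro x hx
    have h1x : (0:ℝ) ≤ 1 - x := by linarith [hx.2]
    simp only [Real.norm_eq_abs]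
    rw [Real.rpow_neg h1x, ← Real.sqrt_eq_rpow, one_div]

lemma FPintUp (t u : ℝ) (htu : t < u) (hu1 : u ≤ 1) :
    IntervalIntegrable (fun x => 1 / ((x - t) * Real.sqrt (1 - x))) volume u 1 := by
  refine ((FPintSqrt u hu1).const_mul (1/(u-t))).mono_fun ?_ ?_
  · exact (measurable_const.div ((measurable_id.sub measurable_const).mul
      (Real.continuous_sqrt.comp (continuous_const.sub continuous_id)).measurable)).aestronglyMeasurable
  · rw [Set.uIoc_of_le hu1]
    refine (ae_restrict_iff' measurableSet_Ioc).mpr (Filter.Eventually.of_forall ?_)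
    intro x hx
    have hxt : 0 < x - t := by linarith [hx.1]
    have hut : 0 < u - t := by linarith
    have hs : 0 ≤ Real.sqrt (1 - x) := Real.sqrt_nonneg _
    simp only [Real.norm_eq_abs]
    rw [abs_of_nonneg (by positivity), abs_of_nonneg (by positivity)]
    rw [one_div, mul_inv, one_div, mul_comm ((u-t)⁻¹), one_div, mul_comm (x-t)⁻¹]
    apply mul_le_mul_of_nonneg_left _ (inv_nonneg.mpr hs)
    exact inv_anti₀ hut (by linarith [hx.1])

lemma FP_CF1 (t u : ℝ) (htu : t < u) (hu1 : u < 1) :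
    ∫ x in u..1, 1 / ((x - t) * Real.sqrt (1 - x))
      = (1/Real.sqrt (1-t)) * (Real.log (Real.sqrt (1-t) + Real.sqrt (1-u))
          - Real.log (Real.sqrt (1-t) - Real.sqrt (1-u))) := by
  set p := Real.sqrt (1-t) with hp
  have hp0 : 0 < p := Real.sqrt_pos.mpr (by linarith)
  have hp2 : p^2 = 1 - t := Real.sq_sqrt (by linarith)
  have key : ∫ x in u..1, 1 / ((x - t) * Real.sqrt (1 - x))
      = (fun x => (1/p) * (Real.log (p - Real.sqrt (1-x)) - Real.log (p + Real.sqrt (1-x)))) 1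
        - (fun x => (1/p) * (Real.log (p - Real.sqrt (1-x)) - Real.log (p + Real.sqrt (1-x)))) u := by
    apply integral_eq_sub_of_hasDeriv_right_of_le (f' := fun x => 1 / ((x - t) * Real.sqrt (1 - x)))
      (f := fun x => (1/p) * (Real.log (p - Real.sqrt (1-x)) - Real.log (p + Real.sqrt (1-x)))) hu1.le
    · -- continuity
      have hsc : ContinuousOn (fun x : ℝ => Real.sqrt (1-x)) (Icc u 1) :=
        (Real.continuous_sqrt.comp (continuous_const.sub continuous_id)).continuousOn
      have hne1 : ∀ x ∈ Icc u 1, p - Real.sqrt (1-x) ≠ 0 := by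
        intro x hx
        have : Real.sqrt (1-x) ≤ Real.sqrt (1-u) := Real.sqrt_le_sqrt (by linarith [hx.1])
        have h2 : Real.sqrt (1-u) < p := by
          apply Real.sqrt_lt_sqrt (by linarith) (by linarith)
        linarith
      have hne2 : ∀ x ∈ Icc u 1, p + Real.sqrt (1-x) ≠ 0 := by
        intro x hx
        have := Real.sqrt_nonneg (1-x); positivity
      exact continuousOn_const.mul
        (((continuousOn_const.sub hsc).log hne1).sub ((continuousOn_const.add hsc).log hne2))
    · -- derivative
      intro x hx
      apply HasDerivAt.hasDerivWithinAt
      have h1x : 0 < 1 - x := by linarith [hx.2]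
      set s := Real.sqrt (1-x) with hs
      have hs0 : 0 < s := Real.sqrt_pos.mpr h1x
      have hs2 : s^2 = 1 - x := Real.sq_sqrt h1x.le
      have hps : 0 < p - s := by
        have h2 : s < p := by
          apply Real.sqrt_lt_sqrt h1x.le; · linarith [hx.1]
        linarith
      have hds : HasDerivAt (fun y : ℝ => Real.sqrt (1-y)) (-(1/(2*s))) x := by
        have inner : HasDerivAt (fun y : ℝ => 1 - y) (-1) x := by
          simpa using (hasDerivAt_id x).const_sub 1
        have := inner.sqrt h1x.ne'
        convert this using 1; simp only [hs]; ring
      have hd1 : HasDerivAt (fun y : ℝ => Real.log (p - Real.sqrt (1-y)))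
          ((1/(2*s))/(p - s)) x := by
        have := ((hasDerivAt_const x p).sub hds).log hps.ne'
        simpa using this
      have hd2 : HasDerivAt (fun y : ℝ => Real.log (p + Real.sqrt (1-y)))
          ((-(1/(2*s)))/(p + s)) x := by
        have := ((hasDerivAt_const x p).add hds).log (ne_of_gt (by show 0 < p + Real.sqrt (1-x); linarith [Real.sqrt_nonneg (1-x)]))
        simpa using this
      have := ((hd1.sub hd2).const_mul (1/p))
      refine this.congr_deriv ?_
      have hxt : x - t = p^2 - s^2 := by rw [hp2, hs2]; ring
      rw [hxt, show p^2 - s^2 = (p-s)*(p+s) by ring]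
      have hps2 : (0:ℝ) < p + s := by positivity
      field_simp
      ring
    · exact FPintUp t u htu hu1.le
  rw [key]
  have h11 : Real.sqrt (1 - (1:ℝ)) = 0 := by norm_num
  simp only [h11]
  rw [sub_zero, add_zero, sub_self]  -- f 1 = (1/p)*(log p - log p) = 0
  ring

lemma FP_CF2 (t u : ℝ) (ht : 0 ≤ t) (hu0 : 0 < u) (hu1 : u < 1) :
    ∫ x in u..1, Real.sqrt (1-x) / (x + t)
      = Real.sqrt (1+t) * (Real.log (Real.sqrt (1+t) + Real.sqrt (1-u))
          - Real.log (Real.sqrt (1+t) - Real.sqrt (1-u))) - 2 * Real.sqrt (1-u) := by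
  set q := Real.sqrt (1+t) with hq
  have hq2' : q^2 = 1 + t := Real.sq_sqrt (by linarith)
  have hqnn : 0 ≤ q := Real.sqrt_nonneg _
  have hq1 : 1 ≤ q := by nlinarith
  have hq0 : 0 < q := by linarith
  have hq2 : q^2 = 1 + t := Real.sq_sqrt (by linarith)
  have hqs : ∀ x ∈ Icc u 1, q - Real.sqrt (1-x) > 0 := by
    intro x hx
    have h1 : Real.sqrt (1-x) ≤ Real.sqrt (1-u) := Real.sqrt_le_sqrt (by linarith [hx.1])
    have h2 : Real.sqrt (1-u) < 1 := by
      have e2 : Real.sqrt (1-u) ^ 2 = 1 - u := Real.sq_sqrt (by linarith)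
      nlinarith [Real.sqrt_nonneg (1-u)]
    linarith
  have key : ∫ x in u..1, Real.sqrt (1-x) / (x + t)
      = (fun x => q * (Real.log (q - Real.sqrt (1-x)) - Real.log (q + Real.sqrt (1-x)))
          + 2 * Real.sqrt (1-x)) 1
        - (fun x => q * (Real.log (q - Real.sqrt (1-x)) - Real.log (q + Real.sqrt (1-x)))
          + 2 * Real.sqrt (1-x)) u := by
    apply integral_eq_sub_of_hasDeriv_right_of_le
      (f' := fun x => Real.sqrt (1-x) / (x + t))
      (f := fun x => q * (Real.log (q - Real.sqrt (1-x)) - Real.log (q + Real.sqrt (1-x)))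
          + 2 * Real.sqrt (1-x)) hu1.le
    · have hsc : ContinuousOn (fun x : ℝ => Real.sqrt (1-x)) (Icc u 1) :=
        (Real.continuous_sqrt.comp (continuous_const.sub continuous_id)).continuousOn
      refine (continuousOn_const.mul (((continuousOn_const.sub hsc).log ?_).sub
        ((continuousOn_const.add hsc).log ?_))).add (continuousOn_const.mul hsc)
      · intro x hx; exact (hqs x hx).ne'
      · intro x hx; have := Real.sqrt_nonneg (1-x); exact (by linarith : 0 < q + Real.sqrt (1-x)).ne'
    · intro x hx
      apply HasDerivAt.hasDerivWithinAt
      have h1x : 0 < 1 - x := by linarith [hx.2]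
      set s := Real.sqrt (1-x) with hs
      have hs0 : 0 < s := Real.sqrt_pos.mpr h1x
      have hs2 : s^2 = 1 - x := Real.sq_sqrt h1x.le
      have hps : 0 < q - s := hqs x ⟨hx.1.le, hx.2.le⟩
      have hxt : 0 < x + t := by linarith [hx.1]
      have hds : HasDerivAt (fun y : ℝ => Real.sqrt (1-y)) (-(1/(2*s))) x := by
        have inner : HasDerivAt (fun y : ℝ => 1 - y) (-1) x := by
          simpa using (hasDerivAt_id x).const_sub 1
        have := inner.sqrt h1x.ne'
        convert this using 1; simp only [hs]; ring
      have hd1 : HasDerivAt (fun y : ℝ => Real.log (q - Real.sqrt (1-y)))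
          ((1/(2*s))/(q - s)) x := by
        have := ((hasDerivAt_const x q).sub hds).log hps.ne'
        simpa using this
      have hd2 : HasDerivAt (fun y : ℝ => Real.log (q + Real.sqrt (1-y)))
          ((-(1/(2*s)))/(q + s)) x := by
        have := ((hasDerivAt_const x q).add hds).log (ne_of_gt (by show 0 < q + Real.sqrt (1-x); linarith [Real.sqrt_nonneg (1-x)]))
        simpa using this
      have := ((hd1.sub hd2).const_mul q).add (hds.const_mul 2)
      refine this.congr_deriv ?_
      have hfac : x + t = q^2 - s^2 := by rw [hq2, hs2]; ring
      rw [hfac, show q^2 - s^2 = (q-s)*(q+s) by ring]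
      have hqs2 : (0:ℝ) < q + s := by positivity
      field_simp
      ring
    · apply ContinuousOn.intervalIntegrable
      rw [uIcc_of_le hu1.le]
      refine ContinuousOn.div
        (Real.continuous_sqrt.comp (continuous_const.sub continuous_id)).continuousOn
        (continuous_id.add continuous_const).continuousOn ?_
      intro x hx
      exact ne_of_gt (by linarith [hx.1] : (0:ℝ) < x + t)
  rw [key]
  have h11 : Real.sqrt (1 - (1:ℝ)) = 0 := by norm_num
  simp only [h11, Real.sqrt_zero, sub_zero, add_zero, mul_zero, sub_self, zero_add]
  ring

lemma FP_g_le_up {a b c t : ℝ} (ha : 0 < a) (hb : 0 < b) (hb1 : b < 1)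
    (ht : 0 ≤ t) (hbt : b * t = |c|) : ∀ x, t < x → x ≤ 1 →
    (1 - b*x) / Real.sqrt (x*(1-x)*(a+b*x)*(c+b*x))
      ≤ (1/Real.sqrt (a*b)) * (1/((x-t)*Real.sqrt (1-x))) := by
  intro x htx hx1
  rcases eq_or_lt_of_le hx1 with heq | hx1
  · subst heq
    norm_num
  · have hx0 : 0 < x := lt_of_le_of_lt ht htx
    have hxt : 0 < x - t := by linarith
    have h1x : 0 < 1 - x := by linarith
    have hcb : b*(x-t) ≤ c + b*x := by
      have h := neg_abs_le c
      rw [← hbt] at h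
      linarith
    have hcb0 : 0 < c + b*x := lt_of_lt_of_le (by positivity) hcb
    have hD : a*b*((x-t)^2*(1-x)) ≤ x*(1-x)*(a+b*x)*(c+b*x) := by
      have e1 : a*b*((x-t)^2*(1-x)) = (x-t)*(1-x)*a*(b*(x-t)) := by ring
      rw [e1]
      have i2 : (x-t)*(1-x) ≤ x*(1-x) := mul_le_mul_of_nonneg_right (by linarith) h1x.le
      have s1 : (x-t)*(1-x)*a*(b*(x-t)) ≤ x*(1-x)*a*(b*(x-t)) :=
        mul_le_mul_of_nonneg_right (mul_le_mul_of_nonneg_right i2 ha.le) (by positivity)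
      have i3 : x*(1-x)*a ≤ x*(1-x)*(a+b*x) :=
        mul_le_mul_of_nonneg_left (by nlinarith) (by positivity)
      have s2 : x*(1-x)*a*(b*(x-t)) ≤ x*(1-x)*(a+b*x)*(b*(x-t)) :=
        mul_le_mul_of_nonneg_right i3 (by positivity)
      have s3 : x*(1-x)*(a+b*x)*(b*(x-t)) ≤ x*(1-x)*(a+b*x)*(c+b*x) :=
        mul_le_mul_of_nonneg_left hcb (by positivity)
      linarith
    have hsq : Real.sqrt (a*b*((x-t)^2*(1-x)))
        = Real.sqrt (a*b) * ((x-t)*Real.sqrt (1-x)) := by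
      rw [Real.sqrt_mul (by positivity), Real.sqrt_mul (sq_nonneg _), Real.sqrt_sq hxt.le]
    have hlow : 0 < Real.sqrt (a*b*((x-t)^2*(1-x))) := Real.sqrt_pos.mpr (by positivity)
    have hle : Real.sqrt (a*b*((x-t)^2*(1-x))) ≤ Real.sqrt (x*(1-x)*(a+b*x)*(c+b*x)) :=
      Real.sqrt_le_sqrt hD
    have hnum : 1 - b*x ≤ 1 := by nlinarith
    calc (1 - b*x) / Real.sqrt (x*(1-x)*(a+b*x)*(c+b*x))
        ≤ 1 / Real.sqrt (a*b*((x-t)^2*(1-x))) := div_le_div₀ zero_le_one hnum hlow hle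
      _ = (1/Real.sqrt (a*b)) * (1/((x-t)*Real.sqrt (1-x))) := by
          rw [hsq, one_div, mul_inv, ← one_div, ← one_div]

lemma FP_lo_le_g {a b c t : ℝ} (ha : 0 < a) (hb : 0 < b) (hb1 : b < 1)
    (ht : 0 ≤ t) (hbt : b * t = |c|) : ∀ x, t < x → x ≤ 1 →
    (1/Real.sqrt ((a+b)*b)) * (Real.sqrt (1-x)/(x+t))
      ≤ (1 - b*x) / Real.sqrt (x*(1-x)*(a+b*x)*(c+b*x)) := by
  intro x htx hx1
  rcases eq_or_lt_of_le hx1 with heq | hx1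
  · subst heq
    norm_num
  · have hx0 : 0 < x := lt_of_le_of_lt ht htx
    have hxt : 0 < x - t := by linarith
    have hxt' : 0 < x + t := by linarith
    have h1x : 0 < 1 - x := by linarith
    have hcb : b*(x-t) ≤ c + b*x := by
      have h := neg_abs_le c
      rw [← hbt] at h
      linarith
    have hcb0 : 0 < c + b*x := lt_of_lt_of_le (by positivity) hcb
    have hcb2 : c + b*x ≤ b*(x+t) := by
      have h := le_abs_self c
      rw [← hbt] at h
      linarith
    have hD : x*(1-x)*(a+b*x)*(c+b*x) ≤ (a+b)*b*((x+t)^2*(1-x)) := by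
      have s1 : x*(1-x)*(a+b*x)*(c+b*x) ≤ x*(1-x)*(a+b*x)*(b*(x+t)) :=
        mul_le_mul_of_nonneg_left hcb2 (by positivity)
      have i2 : x*(1-x)*(a+b*x) ≤ x*(1-x)*(a+b) :=
        mul_le_mul_of_nonneg_left (by nlinarith) (by positivity)
      have s2 : x*(1-x)*(a+b*x)*(b*(x+t)) ≤ x*(1-x)*(a+b)*(b*(x+t)) :=
        mul_le_mul_of_nonneg_right i2 (by positivity)
      have i3 : x*(1-x) ≤ (x+t)*(1-x) := mul_le_mul_of_nonneg_right (by linarith) h1x.le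
      have s3 : x*(1-x)*(a+b)*(b*(x+t)) ≤ (x+t)*(1-x)*(a+b)*(b*(x+t)) :=
        mul_le_mul_of_nonneg_right (mul_le_mul_of_nonneg_right i3 (by positivity)) (by positivity)
      have e : (x+t)*(1-x)*(a+b)*(b*(x+t)) = (a+b)*b*((x+t)^2*(1-x)) := by ring
      linarith
    have hDpos : 0 < x*(1-x)*(a+b*x)*(c+b*x) := by positivity
    have hsq : Real.sqrt ((a+b)*b*((x+t)^2*(1-x)))
        = Real.sqrt ((a+b)*b) * ((x+t)*Real.sqrt (1-x)) := by
      rw [Real.sqrt_mul (by positivity), Real.sqrt_mul (sq_nonneg _), Real.sqrt_sq hxt'.le]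
    have hle : Real.sqrt (x*(1-x)*(a+b*x)*(c+b*x)) ≤ Real.sqrt ((a+b)*b*((x+t)^2*(1-x))) :=
      Real.sqrt_le_sqrt hD
    have hnum : 1 - x ≤ 1 - b*x := by nlinarith
    have hsp : 0 < Real.sqrt (1-x) := Real.sqrt_pos.mpr h1x
    have hs1x : Real.sqrt (1-x) * Real.sqrt (1-x) = 1 - x := Real.mul_self_sqrt h1x.le
    set K := Real.sqrt ((a+b)*b) with hK
    have hK0 : 0 < K := Real.sqrt_pos.mpr (by positivity)
    calc (1/K) * (Real.sqrt (1-x)/(x+t))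
        = Real.sqrt (1-x) / (K*(x+t)) := by rw [div_mul_div_comm, one_mul]
      _ = (Real.sqrt (1-x) * Real.sqrt (1-x)) / ((K*(x+t)) * Real.sqrt (1-x)) := by
          rw [mul_div_mul_right _ _ hsp.ne']
      _ = (1-x) / (K * ((x+t) * Real.sqrt (1-x))) := by rw [hs1x, mul_assoc]
      _ = (1-x) / Real.sqrt ((a+b)*b*((x+t)^2*(1-x))) := by rw [hsq]
      _ ≤ (1 - b*x) / Real.sqrt (x*(1-x)*(a+b*x)*(c+b*x)) :=
          div_le_div₀ (by nlinarith) hnum (Real.sqrt_pos.mpr hDpos) hle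

lemma FP_g_meas {a b c : ℝ} : Measurable
    (fun x => (1 - b*x) / Real.sqrt (x*(1-x)*(a+b*x)*(c+b*x))) := by
  apply Measurable.div
  · exact (continuous_const.sub (continuous_const.mul continuous_id)).measurable
  · exact (Real.continuous_sqrt.comp (by continuity)).measurable

lemma FP_g_nonneg {a b c : ℝ} (hb : 0 < b) (hb1 : b < 1) (x : ℝ) (hx1 : x ≤ 1) :
    0 ≤ (1 - b*x) / Real.sqrt (x*(1-x)*(a+b*x)*(c+b*x)) := by
  apply div_nonneg _ (Real.sqrt_nonneg _)
  rcases le_or_gt x 0 with h | h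
  · nlinarith
  · nlinarith

lemma FP_g_int {a b c t : ℝ} (ha : 0 < a) (hb : 0 < b) (hb1 : b < 1)
    (ht : 0 ≤ t) (hbt : b * t = |c|) {u : ℝ} (htu : t < u) (hu1 : u ≤ 1) :
    IntervalIntegrable
      (fun x => (1 - b*x) / Real.sqrt (x*(1-x)*(a+b*x)*(c+b*x))) volume u 1 := by
  refine ((FPintUp t u htu hu1).const_mul (1/Real.sqrt (a*b))).mono_fun
    FP_g_meas.aestronglyMeasurable ?_
  rw [Set.uIoc_of_le hu1]
  refine (ae_restrict_iff' measurableSet_Ioc).mpr (Filter.Eventually.of_forall ?_)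
  intro x hx
  have h1 : (0:ℝ) ≤ 1/Real.sqrt (a*b) := by positivity
  have h2 : (0:ℝ) ≤ 1/((x-t)*Real.sqrt (1-x)) := by
    have : (0:ℝ) < x - t := by linarith [hx.1]
    positivity
  simp only [Real.norm_eq_abs]
  rw [abs_of_nonneg (FP_g_nonneg hb hb1 x hx.2), abs_of_nonneg (by positivity)]
  exact FP_g_le_up ha hb hb1 ht hbt x (lt_trans htu hx.1) hx.2

lemma FP_lo_int {t K : ℝ} (ht : 0 ≤ t) {u v : ℝ} (htu : 0 < u) (huv : u ≤ v)
    (hv1 : v ≤ 1) : IntervalIntegrable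
      (fun x => (1/K) * (Real.sqrt (1-x)/(x+t))) volume u v := by
  apply ContinuousOn.intervalIntegrable
  refine continuousOn_const.mul (ContinuousOn.div
    (Real.continuous_sqrt.comp (continuous_const.sub continuous_id)).continuousOn
    (continuous_id.add continuous_const).continuousOn ?_)
  intro x hx
  rw [uIcc_of_le huv] at hx
  exact ne_of_gt (by linarith [hx.1] : (0:ℝ) < x + t)

lemma FP_F_upper {a b c t : ℝ} (ha : 0 < a) (hb : 0 < b) (hb1 : b < 1)
    (ht : 0 ≤ t) (hbt : b * t = |c|) (ht2 : t ≤ 1/2) {u : ℝ} (htu : t < u) (hu1 : u < 1) :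
    F a b c u ≤ (1+t) * (2*Real.log 2 - Real.log (u-t)) / Real.sqrt (a*b) := by
  have h1 : F a b c u ≤ ∫ x in u..1, (1/Real.sqrt (a*b)) * (1/((x-t)*Real.sqrt (1-x))) := by
    rw [F]
    refine integral_mono_on hu1.le (FP_g_int ha hb hb1 ht hbt htu hu1.le)
      ((FPintUp t u htu hu1.le).const_mul _) ?_
    intro x hx
    exact FP_g_le_up ha hb hb1 ht hbt x (lt_of_lt_of_le htu hx.1) hx.2
  rw [intervalIntegral.integral_const_mul, FP_CF1 t u htu hu1] at h1
  set p := Real.sqrt (1-t) with hpdef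
  set s := Real.sqrt (1-u) with hsdef
  have hp0 : 0 < p := Real.sqrt_pos.mpr (by linarith)
  have hp2 : p^2 = 1-t := Real.sq_sqrt (by linarith)
  have hs0 : 0 ≤ s := Real.sqrt_nonneg _
  have hs2 : s^2 = 1-u := Real.sq_sqrt (by linarith)
  have hsp : s < p := by
    apply Real.sqrt_lt_sqrt (by linarith) (by linarith)
  have hp1 : p ≤ 1 := by nlinarith
  have hs1 : s ≤ 1 := by nlinarith
  have hut : 0 < u - t := by linarith
  have hprod : (p+s)*(p-s) = u - t := by nlinarith
  have hlog : Real.log (p-s) = Real.log (u-t) - Real.log (p+s) := by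
    rw [← hprod, Real.log_mul (by positivity) (by linarith : (0:ℝ) < p - s).ne']
    ring
  have hcontent : Real.log (p+s) - Real.log (p-s) ≤ 2*Real.log 2 - Real.log (u-t) := by
    have hle2 : Real.log (p+s) ≤ Real.log 2 := Real.log_le_log (by positivity) (by linarith)
    rw [hlog]; linarith
  have hcnn : 0 ≤ Real.log (p+s) - Real.log (p-s) := by
    have : Real.log (p-s) ≤ Real.log (p+s) := Real.log_le_log (by linarith) (by linarith)
    linarith
  have hpinv : 1/p ≤ 1 + t := by
    rw [div_le_iff₀ hp0]
    nlinarith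
  calc F a b c u ≤ (1/Real.sqrt (a*b)) * ((1/p) * (Real.log (p+s) - Real.log (p-s))) := h1
    _ ≤ (1/Real.sqrt (a*b)) * ((1+t) * (2*Real.log 2 - Real.log (u-t))) := by
        apply mul_le_mul_of_nonneg_left _ (by positivity)
        calc (1/p) * (Real.log (p+s) - Real.log (p-s))
            ≤ (1+t) * (Real.log (p+s) - Real.log (p-s)) :=
              mul_le_mul_of_nonneg_right hpinv hcnn
          _ ≤ (1+t) * (2*Real.log 2 - Real.log (u-t)) :=
              mul_le_mul_of_nonneg_left hcontent (by linarith)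
    _ = (1+t) * (2*Real.log 2 - Real.log (u-t)) / Real.sqrt (a*b) := by ring

lemma FP_F_lower {a b c t : ℝ} (ha : 0 < a) (hb : 0 < b) (hb1 : b < 1)
    (ht : 0 ≤ t) (hbt : b * t = |c|) {u : ℝ} (htu : t < u) (hu1 : u < 1)
    (hut1 : u + t ≤ 1) :
    (-Real.log (u+t) - 2) / Real.sqrt ((a+b)*b) ≤ F a b c u := by
  have hu0 : 0 < u := lt_of_le_of_lt ht htu
  have h1 : ∫ x in u..1, (1/Real.sqrt ((a+b)*b)) * (Real.sqrt (1-x)/(x+t)) ≤ F a b c u := by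
    rw [F]
    refine integral_mono_on hu1.le (FP_lo_int ht hu0 hu1.le le_rfl)
      (FP_g_int ha hb hb1 ht hbt htu hu1.le) ?_
    intro x hx
    exact FP_lo_le_g ha hb hb1 ht hbt x (lt_of_lt_of_le htu hx.1) hx.2
  rw [intervalIntegral.integral_const_mul, FP_CF2 t u ht hu0 hu1] at h1
  set q := Real.sqrt (1+t) with hqdef
  set s := Real.sqrt (1-u) with hsdef
  have hq2 : q^2 = 1+t := Real.sq_sqrt (by linarith)
  have hqnn : 0 ≤ q := Real.sqrt_nonneg _
  have hq1 : 1 ≤ q := by nlinarith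
  have hs0 : 0 ≤ s := Real.sqrt_nonneg _
  have hs2 : s^2 = 1-u := Real.sq_sqrt (by linarith)
  have hs1 : s < 1 := by nlinarith
  have hqs : 0 < q - s := by linarith
  have hut : 0 < u + t := by linarith
  have hprod : (q+s)*(q-s) = u + t := by nlinarith
  have hlog : Real.log (q-s) = Real.log (u+t) - Real.log (q+s) := by
    rw [← hprod, Real.log_mul (by positivity) hqs.ne']
    ring
  have hlqs : 0 ≤ Real.log (q+s) := Real.log_nonneg (by linarith)
  have hlut : Real.log (u+t) ≤ 0 := Real.log_nonpos hut.le hut1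
  have hcontent : -Real.log (u+t) ≤ Real.log (q+s) - Real.log (q-s) := by
    rw [hlog]; linarith
  have hcnn : 0 ≤ Real.log (q+s) - Real.log (q-s) := by linarith
  have hq_mul : Real.log (q+s) - Real.log (q-s)
      ≤ q * (Real.log (q+s) - Real.log (q-s)) := le_mul_of_one_le_left hcnn hq1
  have hbound : -Real.log (u+t) - 2
      ≤ q * (Real.log (q+s) - Real.log (q-s)) - 2*s := by nlinarith
  calc (-Real.log (u+t) - 2) / Real.sqrt ((a+b)*b)
      = (1/Real.sqrt ((a+b)*b)) * (-Real.log (u+t) - 2) := by ring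
    _ ≤ (1/Real.sqrt ((a+b)*b)) * (q * (Real.log (q+s) - Real.log (q-s)) - 2*s) :=
        mul_le_mul_of_nonneg_left hbound (by positivity)
    _ ≤ F a b c u := h1

lemma FP_F_anti {a b c t : ℝ} (ha : 0 < a) (hb : 0 < b) (hb1 : b < 1)
    (ht : 0 ≤ t) (hbt : b * t = |c|) {u v : ℝ} (htu : t < u) (huv : u < v)
    (hv1 : v < 1) : F a b c v < F a b c u := by
  have hu1 : u < 1 := lt_trans huv hv1
  have hgu : IntervalIntegrable
      (fun x => (1 - b*x) / Real.sqrt (x*(1-x)*(a+b*x)*(c+b*x))) volume u v := by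
    apply (FP_g_int ha hb hb1 ht hbt htu hu1.le).mono_set
    rw [uIcc_of_le huv.le, uIcc_of_le hu1.le]
    exact Icc_subset_Icc le_rfl hv1.le
  have hgv : IntervalIntegrable
      (fun x => (1 - b*x) / Real.sqrt (x*(1-x)*(a+b*x)*(c+b*x))) volume v 1 :=
    FP_g_int ha hb hb1 ht hbt (lt_trans htu huv) hv1.le
  have hsplit := integral_add_adjacent_intervals hgu hgv
  have hu0 : 0 < u := lt_of_le_of_lt ht htu
  have hlo_pos : 0 < ∫ x in u..v, (1/Real.sqrt ((a+b)*b)) * (Real.sqrt (1-x)/(x+t)) := by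
    apply intervalIntegral_pos_of_pos_on (FP_lo_int ht hu0 huv.le hv1.le) _ huv
    intro x hx
    have h1 : (0:ℝ) < Real.sqrt (1-x) := Real.sqrt_pos.mpr (by linarith [hx.2])
    have h2 : (0:ℝ) < x + t := by linarith [hx.1]
    have h3 : (0:ℝ) < Real.sqrt ((a+b)*b) := Real.sqrt_pos.mpr (by positivity)
    positivity
  have hmono : ∫ x in u..v, (1/Real.sqrt ((a+b)*b)) * (Real.sqrt (1-x)/(x+t))
      ≤ ∫ x in u..v, (1 - b*x) / Real.sqrt (x*(1-x)*(a+b*x)*(c+b*x)) := by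
    refine integral_mono_on huv.le (FP_lo_int ht hu0 huv.le hv1.le) hgu ?_
    intro x hx
    exact FP_lo_le_g ha hb hb1 ht hbt x (lt_of_lt_of_le htu hx.1) (le_trans hx.2 hv1.le)
  have hFu : F a b c u = (∫ x in u..v, (1 - b*x) / Real.sqrt (x*(1-x)*(a+b*x)*(c+b*x)))
      + F a b c v := by
    rw [F, F, ← hsplit]
  linarith

lemma FP_F_cont {a b c t : ℝ} (ha : 0 < a) (hb : 0 < b) (hb1 : b < 1)
    (ht : 0 ≤ t) (hbt : b * t = |c|) {u₁ u₀ : ℝ} (ht1 : t < u₁) (h10 : u₁ ≤ u₀)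
    (h01 : u₀ < 1) : ContinuousOn (F a b c) (Icc u₁ u₀) := by
  have hint : IntegrableOn
      (fun x => (1 - b*x) / Real.sqrt (x*(1-x)*(a+b*x)*(c+b*x))) (uIcc u₁ u₀) volume := by
    rw [uIcc_of_le h10, integrableOn_Icc_iff_integrableOn_Ioc]
    have hu11 : u₁ ≤ 1 := le_trans h10 h01.le
    have h := (FP_g_int ha hb hb1 ht hbt ht1 hu11).mono_set
      (by rw [uIcc_of_le h10, uIcc_of_le hu11]; exact Icc_subset_Icc le_rfl h01.le)
    exact h.1
  have hprim := intervalIntegral.continuousOn_primitive_interval hint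
  rw [uIcc_of_le h10] at hprim
  apply ContinuousOn.congr ((continuousOn_const (c := F a b c u₁)).sub hprim)
  intro u hu
  have hg1 : IntervalIntegrable
      (fun x => (1 - b*x) / Real.sqrt (x*(1-x)*(a+b*x)*(c+b*x))) volume u₁ u := by
    apply (FP_g_int ha hb hb1 ht hbt ht1 (by linarith [hu.2, h01] : u₁ ≤ (1:ℝ))).mono_set
    rw [uIcc_of_le hu.1, uIcc_of_le (by linarith [hu.2, h01] : u₁ ≤ (1:ℝ))]
    exact Icc_subset_Icc le_rfl (by linarith [hu.2])
  have hg2 : IntervalIntegrable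
      (fun x => (1 - b*x) / Real.sqrt (x*(1-x)*(a+b*x)*(c+b*x))) volume u 1 :=
    FP_g_int ha hb hb1 ht hbt (lt_of_lt_of_le ht1 hu.1) (by linarith [hu.2])
  have hsplit := integral_add_adjacent_intervals hg1 hg2
  simp only [F, Pi.sub_apply]
  rw [← hsplit]
  ring

-- numeric helper: M u₀ ≥ log 23
lemma FP_M_ge_log23 {u₀ : ℝ} (h0 : 0 < u₀) (h1 : u₀ < 1) : Real.log 23 ≤ M u₀ := by
  have hs2 : (1.375:ℝ) ≤ Real.sqrt 2 := by
    nlinarith [Real.sq_sqrt (by norm_num : (0:ℝ) ≤ 2), Real.sqrt_nonneg 2]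
  have hL : 0 < Real.log (1 + Real.sqrt 2) := Real.log_pos (by nlinarith)
  have hden : Real.sqrt (1 - u₀) ≤ 1 := Real.sqrt_le_one.mpr (by linarith)
  have hden0 : 0 < Real.sqrt (1 - u₀) := Real.sqrt_pos.mpr (by linarith)
  have hfrac : 2 * Real.log (1 + Real.sqrt 2) ≤ 2 * Real.log (1 + Real.sqrt 2) / Real.sqrt (1 - u₀) := by
    rw [le_div_iff₀ hden0]
    nlinarith
  have hkey : Real.log 23 ≤ 2 * Real.log (1 + Real.sqrt 2) + 2 * Real.log 2 := by
    have e1 : Real.log (1 + Real.sqrt 2) + Real.log 2 = Real.log (2 + 2*Real.sqrt 2) := by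
      rw [← Real.log_mul (by nlinarith) (by norm_num)]
      ring_nf
    have e2 : Real.log 23 ≤ Real.log ((2 + 2*Real.sqrt 2)^2) := by
      apply Real.log_le_log (by norm_num)
      nlinarith [Real.sq_sqrt (by norm_num : (0:ℝ) ≤ 2), hs2]
    rw [Real.log_pow] at e2
    push_cast at e2
    linarith
  unfold M
  linarith

lemma FP_exp_sq_bound {S : ℝ} (hS : 0 ≤ S) : Real.exp (-S) ≤ 4 / (S + 2)^2 := by
  have h := Real.add_one_le_exp (S/2)
  have h2 : (S/2 + 1)^2 ≤ Real.exp (S/2) ^ 2 := by nlinarith [Real.exp_pos (S/2)]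
  have h3 : Real.exp (S/2) ^ 2 = Real.exp S := by
    rw [← Real.exp_nat_mul]
    congr 1
    push_cast
    ring
  rw [Real.exp_neg]
  rw [inv_eq_one_div, div_le_div_iff₀ (Real.exp_pos S) (by positivity)]
  nlinarith

lemma FP_E3_aux {t S L : ℝ} (ht : 0 ≤ t) (hS : (100:ℝ) ≤ S)
    (hT4 : t ≤ 4/(S+2)^2) (hL : L ≤ 2*π*S - 1) : (1+t)*L < 2*π*S := by
  have hπ3 : 3 < π := Real.pi_gt_three
  have hπ315 : π < 3.15 := Real.pi_lt_d2
  have hS0 : 0 < S := by linarith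
  rcases le_or_gt L 0 with hc0 | hc0
  · have hnp : (1+t)*L ≤ 0 := mul_nonpos_of_nonneg_of_nonpos (by linarith) hc0
    have h2πS : (0:ℝ) < 2*π*S := by positivity
    linarith
  · have htS : t*(2*π*S) ≤ 1/2 := by
      have h2 : t*(2*π*S) ≤ (4/(S+2)^2)*(2*π*S) :=
        mul_le_mul_of_nonneg_right hT4 (by positivity)
      have h3 : (4/(S+2)^2)*(2*π*S) ≤ 1/2 := by
        rw [div_mul_eq_mul_div, div_le_iff₀ (by positivity)]
        nlinarith [mul_nonneg hS0.le (by linarith : (0:ℝ) ≤ S - 100),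
          mul_le_mul_of_nonneg_right hπ315.le hS0.le]
      linarith
    have hmul : t*L ≤ t*(2*π*S) := mul_le_mul_of_nonneg_left (by linarith) ht
    nlinarith

set_option maxHeartbeats 1000000 in
/-- Proposition 1: for every `u₀ ∈ (0,1)`, for `ab` large enough and
`|c| < b·exp(−2π√(ab) − M(u₀))`, the equation `F_{a,b,c}(u) = 2π` has a
unique solution `u_S ∈ (|c|/b, u₀)`, which satisfies
`|c|/b < u_S < exp(−2π√(ab) + M(u₀))`. -/
theorem F_eq_two_pi_unique_solution :
    ∀ u₀ ∈ Set.Ioo (0 : ℝ) 1, ∃ A₀ > (0 : ℝ), ∀ a b c : ℝ,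
      0 < a → 0 < b → b < 1 → -b < c → c < a → A₀ ≤ a * b →
      |c| < b * Real.exp (-2 * π * Real.sqrt (a * b) - M u₀) →
      (∃! u : ℝ, u ∈ Set.Ioo (|c| / b) u₀ ∧ F a b c u = 2 * π) ∧
      ∀ u : ℝ, u ∈ Set.Ioo (|c| / b) u₀ → F a b c u = 2 * π →
        |c| / b < u ∧ u < Real.exp (-2 * π * Real.sqrt (a * b) + M u₀) := by
  rintro u₀ ⟨hu₀0, hu₀1⟩
  have hlu : 0 ≤ Real.log (8/u₀) := Real.log_nonneg (by rw [le_div_iff₀ hu₀0]; linarith)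
  have hApos : (0:ℝ) < 100 + Real.log (8/u₀) := by linarith
  refine ⟨(100 + Real.log (8/u₀))^2, by positivity, ?_⟩
  intro a b c ha hb hb1 hbc hca hab hc
  set t := |c| / b with htdef
  have ht : 0 ≤ t := div_nonneg (abs_nonneg c) hb.le
  have hbt : b * t = |c| := by rw [htdef]; field_simp
  set S := Real.sqrt (a*b) with hSdef
  have hS0 : 0 < S := Real.sqrt_pos.mpr (by positivity)
  have hS2 : S^2 = a*b := Real.sq_sqrt (by positivity)
  have hS100 : 100 + Real.log (8/u₀) ≤ S := by
    rw [hSdef]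
    calc 100 + Real.log (8/u₀) = Real.sqrt ((100 + Real.log (8/u₀))^2) :=
          (Real.sqrt_sq hApos.le).symm
      _ ≤ Real.sqrt (a*b) := Real.sqrt_le_sqrt hab
  have hS100' : (100:ℝ) ≤ S := by linarith
  have hSlog : Real.log (8/u₀) ≤ S - 100 := by linarith
  have hπ3 : 3 < π := Real.pi_gt_three
  have hπ315 : π < 3.15 := Real.pi_lt_d2
  have hM23 := FP_M_ge_log23 hu₀0 hu₀1
  have he1 := Real.exp_one_lt_d9
  have he1' := Real.exp_pos 1
  have hexp3 : Real.exp 3 < 23 := by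
    have h3 : Real.exp 3 = (Real.exp 1)^3 := by
      rw [← Real.exp_nat_mul]; congr 1; push_cast; ring
    have hcube : (Real.exp 1)^3 < (2.7182818286:ℝ)^3 := pow_lt_pow_left₀ he1 he1'.le (by norm_num)
    have : (2.7182818286:ℝ)^3 < 23 := by norm_num
    linarith [h3 ▸ hcube]
  have hM3 : 3 ≤ M u₀ := by
    calc (3:ℝ) = Real.log (Real.exp 3) := (Real.log_exp 3).symm
      _ ≤ Real.log 23 := Real.log_le_log (Real.exp_pos _) hexp3.le
      _ ≤ M u₀ := hM23
  have hMln8 : Real.log 8 + 1 ≤ M u₀ := by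
    have h8e : (8:ℝ) * Real.exp 1 ≤ 23 := by nlinarith
    calc Real.log 8 + 1 = Real.log (8 * Real.exp 1) := by
          rw [Real.log_mul (by norm_num) (Real.exp_pos 1).ne', Real.log_exp]
      _ ≤ Real.log 23 := Real.log_le_log (by positivity) h8e
      _ ≤ M u₀ := hM23
  have hM52 : Real.log (5/2) + 2 + π/S < M u₀ := by
    have hpiS : π/S ≤ π/100 :=
      div_le_div_of_nonneg_left (by linarith) (by norm_num) hS100'
    have hx : (0:ℝ) < 1 - π/100 := by nlinarith
    have hexp_small : Real.exp (π/100) ≤ 1/(1 - π/100) := by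
      have h1 : 1 - π/100 ≤ (Real.exp (π/100))⁻¹ := by
        have h := Real.add_one_le_exp (-(π/100))
        rw [Real.exp_neg] at h
        linarith
      rw [le_div_iff₀ hx]
      have h2 := mul_le_mul_of_nonneg_left h1 (Real.exp_pos (π/100)).le
      rw [mul_inv_cancel₀ (Real.exp_pos (π/100)).ne'] at h2
      linarith
    have hexp2 : Real.exp 2 < 7.3890561 := by
      have h2 : Real.exp 2 = (Real.exp 1)^2 := by
        rw [← Real.exp_nat_mul]; congr 1; push_cast; ring
      nlinarith
    have key : Real.exp (2 + π/100) < 9.2 := by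
      rw [Real.exp_add]
      have hup : 1/(1 - π/100) ≤ 1.033 := by
        rw [div_le_iff₀ hx]; nlinarith
      nlinarith [Real.exp_pos (π/100), Real.exp_pos 2]
    have hlt : Real.log (5/2) + (2 + π/100) < Real.log 23 := by
      have e1 : Real.log (5/2) + (2 + π/100) = Real.log ((5/2) * Real.exp (2 + π/100)) := by
        rw [Real.log_mul (by norm_num) (Real.exp_pos _).ne', Real.log_exp]
      rw [e1]
      apply Real.log_lt_log (by positivity)
      nlinarith
    linarith
  -- T facts
  set T := Real.exp (-2*π*S - M u₀) with hTdef
  have hT0 : 0 < T := Real.exp_pos _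
  have htT : t < T := by
    rw [htdef, div_lt_iff₀ hb]
    calc |c| < b * T := hc
      _ = T * b := mul_comm _ _
  have hM0 : 0 < M u₀ := by linarith
  have hTS : T ≤ Real.exp (-S) := by
    apply Real.exp_le_exp.mpr
    nlinarith [mul_nonneg (by linarith : (0:ℝ) ≤ π - 3) hS0.le]
  have hexpS : Real.exp (-S) ≤ 4/(S+2)^2 := FP_exp_sq_bound (by linarith)
  have hexpS' : Real.exp (-S) ≤ 1/1000 := by
    refine le_trans hexpS ?_
    rw [div_le_div_iff₀ (by positivity) (by norm_num)]
    nlinarith [mul_nonneg (by linarith : (0:ℝ) ≤ S - 100) (by linarith : (0:ℝ) ≤ S + 104)]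
  have hT1000 : T ≤ 1/1000 := le_trans hTS hexpS'
  have hTu₀ : T ≤ u₀/8 := by
    have h1 : T ≤ Real.exp (-(Real.log (8/u₀))) :=
      le_trans hTS (Real.exp_le_exp.mpr (by linarith))
    rwa [Real.exp_neg, Real.exp_log (by positivity), inv_div] at h1
  -- u₁
  set u₁ := (3/2)*T with hu₁def
  have htu₁ : t < u₁ := by rw [hu₁def]; linarith
  have hu₁u₀ : u₁ < u₀ := by rw [hu₁def]; linarith
  have hu₁1 : u₁ < 1 := by rw [hu₁def]; linarith
  have hu₁t1 : u₁ + t ≤ 1 := by rw [hu₁def]; linarith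
  -- K bound
  have hKsq : (a+b)*b ≤ (S + 1/(2*S))^2 := by
    have hexpand : (S + 1/(2*S))^2 = S^2 + 1 + 1/(4*S^2) := by
      field_simp; ring
    have h4 : 0 < 1/(4*S^2) := by positivity
    have hb2 : b*b ≤ 1 := by nlinarith
    nlinarith
  have hKle : Real.sqrt ((a+b)*b) ≤ S + 1/(2*S) := by
    calc Real.sqrt ((a+b)*b) ≤ Real.sqrt ((S + 1/(2*S))^2) := Real.sqrt_le_sqrt hKsq
      _ = S + 1/(2*S) := Real.sqrt_sq (by positivity)
  have hK0 : 0 < Real.sqrt ((a+b)*b) := Real.sqrt_pos.mpr (by positivity)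
  -- E1 : 2π < F u₁
  have hE1 : 2*π < F a b c u₁ := by
    have hlow := FP_F_lower ha hb hb1 ht hbt htu₁ hu₁1 hu₁t1
    have hlog_le : Real.log (u₁+t) ≤ Real.log (5/2) + (-2*π*S - M u₀) := by
      calc Real.log (u₁+t) ≤ Real.log ((5/2)*T) :=
            Real.log_le_log (by rw [hu₁def]; linarith) (by rw [hu₁def]; linarith)
        _ = Real.log (5/2) + (-2*π*S - M u₀) := by
            rw [hTdef, Real.log_mul (by norm_num) (Real.exp_pos _).ne', Real.log_exp]
    have hnum : 2*π*(S + 1/(2*S)) < -Real.log (u₁+t) - 2 := by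
      have hexpand : 2*π*(S + 1/(2*S)) = 2*π*S + π/S := by
        field_simp
      rw [hexpand]
      linarith
    have hgt : 2*π < (-Real.log (u₁+t) - 2)/Real.sqrt ((a+b)*b) := by
      rw [lt_div_iff₀ hK0]
      calc 2*π*Real.sqrt ((a+b)*b) ≤ 2*π*(S + 1/(2*S)) :=
            mul_le_mul_of_nonneg_left hKle (by positivity)
        _ < -Real.log (u₁+t) - 2 := hnum
    linarith
  -- E2 : F u₀ < 2π
  have htu₀ : t < u₀ := by linarith
  have ht12 : t ≤ 1/2 := by linarith
  have hE2 : F a b c u₀ < 2*π := by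
    have hup := FP_F_upper ha hb hb1 ht hbt ht12 htu₀ hu₀1
    have h1 : Real.log (u₀/2) ≤ Real.log (u₀-t) :=
      Real.log_le_log (by linarith) (by linarith)
    rw [Real.log_div (ne_of_gt hu₀0) (by norm_num)] at h1
    have hl2 : (0:ℝ) ≤ Real.log 2 := Real.log_nonneg (by norm_num)
    have hcnn : 0 ≤ 2*Real.log 2 - Real.log (u₀-t) := by
      have hld : Real.log (u₀-t) ≤ 0 := Real.log_nonpos (by linarith) (by linarith)
      linarith
    have h2 : (1+t)*(2*Real.log 2 - Real.log (u₀-t)) ≤ 2*(3*Real.log 2 - Real.log u₀) := by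
      have hc1 : 2*Real.log 2 - Real.log (u₀-t) ≤ 3*Real.log 2 - Real.log u₀ := by linarith
      have e1 := mul_le_mul_of_nonneg_right (show (1+t) ≤ (2:ℝ) by linarith) hcnn
      linarith
    have h3 : 3*Real.log 2 - Real.log u₀ = Real.log (8/u₀) := by
      rw [Real.log_div (by norm_num) (ne_of_gt hu₀0),
        show (8:ℝ) = 2^3 by norm_num, Real.log_pow]
      push_cast; ring
    have h4 : F a b c u₀ ≤ 2*Real.log (8/u₀)/S := by
      calc F a b c u₀ ≤ (1+t)*(2*Real.log 2 - Real.log (u₀-t))/S := hup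
        _ ≤ 2*(3*Real.log 2 - Real.log u₀)/S := (div_le_div_iff_of_pos_right hS0).mpr h2
        _ = 2*Real.log (8/u₀)/S := by rw [h3]
    have h5 : 2*Real.log (8/u₀)/S ≤ 2 := by
      rw [div_le_iff₀ hS0]; linarith
    linarith
  -- E3
  set E := Real.exp (-2*π*S + M u₀) with hEdef
  have hE0 : 0 < E := Real.exp_pos _
  have hTE : 2*T ≤ E := by
    have hsplit : E = T * Real.exp (2*M u₀) := by
      rw [hEdef, hTdef, ← Real.exp_add]; congr 1; ring
    have h2M := Real.add_one_le_exp (2*M u₀)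
    have h7 : (2:ℝ) ≤ Real.exp (2*M u₀) := by linarith
    calc 2*T = T*2 := by ring
      _ ≤ T*Real.exp (2*M u₀) := mul_le_mul_of_nonneg_left h7 hT0.le
      _ = E := hsplit.symm
  have hE3 : ∀ u, E ≤ u → u < u₀ → F a b c u < 2*π := by
    intro u hEu huu₀
    have htu : t < u := by linarith
    have hup := FP_F_upper ha hb hb1 ht hbt ht12 htu (lt_trans huu₀ hu₀1)
    have hut2 : E/2 ≤ u - t := by linarith
    have hlogE : Real.log (E/2) ≤ Real.log (u-t) := Real.log_le_log (by positivity) hut2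
    have hlogE2 : Real.log (E/2) = -2*π*S + M u₀ - Real.log 2 := by
      rw [hEdef, Real.log_div (Real.exp_pos _).ne' (by norm_num), Real.log_exp]
    have hln8 : Real.log 8 = 3*Real.log 2 := by
      rw [show (8:ℝ) = 2^3 by norm_num, Real.log_pow]; push_cast; ring
    have hcontent : 2*Real.log 2 - Real.log (u-t) ≤ 2*π*S - 1 := by
      rw [hlogE2] at hlogE
      have : 2*Real.log 2 - Real.log (u-t) ≤ 3*Real.log 2 - M u₀ + 2*π*S := by linarith
      rw [hln8] at hMln8
      linarith
    have hfinal : (1+t)*(2*Real.log 2 - Real.log (u-t)) < 2*π*S :=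
      FP_E3_aux ht hS100' (le_trans (le_trans htT.le hTS) hexpS) hcontent
    have h2π : (1+t)*(2*Real.log 2 - Real.log (u-t))/S < 2*π := by
      rw [div_lt_iff₀ hS0]
      linarith [hfinal]

    linarith [hup]
  -- assemble
  have hcont := FP_F_cont ha hb hb1 ht hbt htu₁ hu₁u₀.le hu₀1
  have hIVT := intermediate_value_Ioo' hu₁u₀.le hcont
  obtain ⟨uS, huS, hFuS⟩ := hIVT (⟨hE2, hE1⟩ : 2*π ∈ Ioo (F a b c u₀) (F a b c u₁))
  have huS_mem : uS ∈ Ioo t u₀ := ⟨lt_trans htu₁ huS.1, huS.2⟩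
  have huniq : ∀ y, y ∈ Ioo t u₀ ∧ F a b c y = 2*π → y = uS := by
    rintro y ⟨hy_mem, hy_eq⟩
    by_contra hne
    rcases lt_or_gt_of_ne hne with hlt | hgt
    · have hanti := FP_F_anti ha hb hb1 ht hbt hy_mem.1 hlt (lt_trans huS_mem.2 hu₀1)
      rw [hy_eq, hFuS] at hanti; exact lt_irrefl _ hanti
    · have hanti := FP_F_anti ha hb hb1 ht hbt huS_mem.1 hgt (lt_trans hy_mem.2 hu₀1)
      rw [hy_eq, hFuS] at hanti; exact lt_irrefl _ hanti
  constructor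
  · exact ⟨uS, ⟨huS_mem, hFuS⟩, huniq⟩
  · intro u hu_mem hu_eq
    refine ⟨hu_mem.1, ?_⟩
    by_contra hE'
    push_neg at hE'
    exact (ne_of_lt (hE3 u hE' hu_mem.2)) hu_eq
end

section
/- For all real numbers β and u with |β| ≤ u and u < 1, one has |∫_u^1 (1/√(x(x − β)) − 1/x) dx| ≤ 2 ln(1+√2). -/
open Real MeasureTheory intervalIntegral

/-- For `0 < u < 1` and `|β| ≤ u`,
`|∫_u^1 (1/√(x(x−β)) − 1/x) dx| ≤ 2·ln(1+√2)`. -/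
theorem abs_integral_regularized_sqrt_le (β u : ℝ) (hβ : |β| ≤ u) (hu0 : 0 < u)
    (hu1 : u < 1) :
    |∫ x in u..1, (1 / Real.sqrt (x * (x - β)) - 1 / x)| ≤
      2 * Real.log (1 + Real.sqrt 2) := by
  have hβu : β ≤ u := le_trans (le_abs_self β) hβ
  have hβn : -u ≤ β := neg_le_of_abs_le hβ
  set F : ℝ → ℝ := fun x => 2 * Real.log (Real.sqrt x + Real.sqrt (x - β)) - Real.log x
    with hFdef
  -- derivative on the open interval
  have hderiv : ∀ x ∈ Set.Ioo u 1,
      HasDerivAt F (1 / Real.sqrt (x * (x - β)) - 1 / x) x := by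
    intro x hx
    have hx0 : 0 < x := lt_trans hu0 hx.1
    have hxβ : 0 < x - β := by linarith [hx.1]
    have ha : 0 < Real.sqrt x := Real.sqrt_pos.2 hx0
    have hb : 0 < Real.sqrt (x - β) := Real.sqrt_pos.2 hxβ
    have h1 : HasDerivAt (fun y : ℝ => Real.sqrt y) (1 / (2 * Real.sqrt x)) x :=
      Real.hasDerivAt_sqrt hx0.ne'
    have h2 : HasDerivAt (fun y : ℝ => Real.sqrt (y - β)) (1 / (2 * Real.sqrt (x - β))) x := by
      have := (Real.hasDerivAt_sqrt hxβ.ne').comp x ((hasDerivAt_id x).sub_const β)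
      simpa [Function.comp_def] using this
    have hsum := h1.add h2
    have hlog := (hsum.log (by show Real.sqrt x + Real.sqrt (x - β) ≠ 0; exact (add_pos ha hb).ne')).const_mul (2 : ℝ)
    have hlogx : HasDerivAt Real.log (1 / x) x := by
      simpa using Real.hasDerivAt_log hx0.ne'
    have hder := hlog.sub hlogx
    refine hder.congr_deriv ?_
    have hab : Real.sqrt (x * (x - β)) = Real.sqrt x * Real.sqrt (x - β) :=
      Real.sqrt_mul hx0.le _
    rw [hab, Pi.add_apply]
    have ha2 : Real.sqrt x * Real.sqrt x = x := Real.mul_self_sqrt hx0.le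
    have hs : Real.sqrt x + Real.sqrt (x - β) ≠ 0 := (add_pos ha hb).ne'
    field_simp
    ring_nf
  -- continuity on the closed interval
  have hcont : ContinuousOn F (Set.Icc u 1) := by
    apply ContinuousOn.sub
    · apply ContinuousOn.mul continuousOn_const
      apply ContinuousOn.log
      · exact (Real.continuous_sqrt.continuousOn).add
          ((Real.continuous_sqrt.comp (continuous_id.sub continuous_const)).continuousOn)
      · intro x hx
        have hx0 : 0 < x := lt_of_lt_of_le hu0 hx.1
        have : 0 < Real.sqrt x := Real.sqrt_pos.2 hx0
        have := Real.sqrt_nonneg (x - β)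
        positivity
    · apply ContinuousOn.log continuousOn_id
      intro x hx
      exact (lt_of_lt_of_le hu0 hx.1).ne'
  -- integrability of the integrand
  have hint : IntervalIntegrable (fun x => 1 / Real.sqrt (x * (x - β)) - 1 / x) volume u 1 := by
    apply IntervalIntegrable.sub
    · have h1 : IntervalIntegrable (fun x : ℝ => (x - β) ^ (-(1/2) : ℝ)) volume u 1 := by
        have := (intervalIntegrable_rpow' (a := u - β) (b := 1 - β)
          (by norm_num : (-1 : ℝ) < -(1/2))).comp_sub_right β
        simpa using this
      have h2 : IntervalIntegrable (fun x : ℝ => (1 / Real.sqrt u) * (x - β) ^ (-(1/2) : ℝ))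
          volume u 1 := h1.const_mul _
      apply h2.mono_fun
      · exact (measurable_const.div ((Real.continuous_sqrt.comp
          (continuous_id.mul (continuous_id.sub continuous_const))).measurable)).aestronglyMeasurable
      · filter_upwards [MeasureTheory.ae_restrict_mem measurableSet_uIoc] with x hx
        rw [Set.uIoc_of_le hu1.le] at hx
        have hxu : u < x := hx.1
        have hx0 : 0 < x := lt_trans hu0 hxu
        have hxβ : 0 < x - β := by linarith
        have hb : 0 < Real.sqrt (x - β) := Real.sqrt_pos.2 hxβ
        have ha : 0 < Real.sqrt x := Real.sqrt_pos.2 hx0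
        have hau : 0 < Real.sqrt u := Real.sqrt_pos.2 hu0
        have hrpow : (x - β) ^ (-(1/2) : ℝ) = 1 / Real.sqrt (x - β) := by
          rw [Real.rpow_neg hxβ.le, Real.sqrt_eq_rpow]
          norm_num
        have hnorm1 : ‖1 / Real.sqrt (x * (x - β))‖ = 1 / (Real.sqrt x * Real.sqrt (x - β)) := by
          rw [Real.sqrt_mul hx0.le]
          exact abs_of_nonneg (by positivity)
        have hnorm2 : ‖(1 / Real.sqrt u) * (x - β) ^ (-(1/2) : ℝ)‖
            = 1 / (Real.sqrt u * Real.sqrt (x - β)) := by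
          rw [hrpow, Real.norm_eq_abs, abs_of_nonneg (by positivity)]
          ring
        rw [hnorm1, hnorm2]
        gcongr
    · apply ContinuousOn.intervalIntegrable
      apply ContinuousOn.div continuousOn_const continuousOn_id
      intro x hx
      rw [Set.uIcc_of_le hu1.le] at hx
      exact (lt_of_lt_of_le hu0 hx.1).ne'
  have hFTC : (∫ x in u..1, (1 / Real.sqrt (x * (x - β)) - 1 / x)) = F 1 - F u :=
    integral_eq_sub_of_hasDerivAt_of_le hu1.le hcont hderiv hint
  -- bounds on F
  have key : ∀ x : ℝ, u ≤ x → x ≤ 1 → 0 ≤ F x ∧ F x ≤ 2 * Real.log (1 + Real.sqrt 2) := by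
    intro x hux hx1
    have hx0 : 0 < x := lt_of_lt_of_le hu0 hux
    have hβx : β ≤ x := le_trans hβu hux
    have hβnx : -x ≤ β := le_trans (by linarith) hβn
    have ha : 0 < Real.sqrt x := Real.sqrt_pos.2 hx0
    have hb : 0 ≤ Real.sqrt (x - β) := Real.sqrt_nonneg _
    have hlogx : Real.log x = 2 * Real.log (Real.sqrt x) := by
      rw [Real.log_sqrt hx0.le]; ring
    have hFx : F x = 2 * (Real.log (Real.sqrt x + Real.sqrt (x - β)) - Real.log (Real.sqrt x)) := by
      rw [hFdef]; dsimp only; rw [hlogx]; ring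
    constructor
    · rw [hFx]
      have : Real.log (Real.sqrt x) ≤ Real.log (Real.sqrt x + Real.sqrt (x - β)) :=
        Real.log_le_log ha (le_add_of_nonneg_right hb)
      linarith
    · rw [hFx]
      have hble : Real.sqrt (x - β) ≤ Real.sqrt 2 * Real.sqrt x := by
        rw [← Real.sqrt_mul (by norm_num : (0:ℝ) ≤ 2)]
        exact Real.sqrt_le_sqrt (by linarith)
      have hsum_le : Real.sqrt x + Real.sqrt (x - β) ≤ (1 + Real.sqrt 2) * Real.sqrt x := by
        nlinarith
      have h12 : (0:ℝ) < 1 + Real.sqrt 2 := by positivity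
      have : Real.log (Real.sqrt x + Real.sqrt (x - β))
          ≤ Real.log ((1 + Real.sqrt 2) * Real.sqrt x) :=
        Real.log_le_log (by positivity) hsum_le
      rw [Real.log_mul h12.ne' ha.ne'] at this
      linarith
  obtain ⟨h1l, h1u⟩ := key 1 hu1.le le_rfl
  obtain ⟨hul, huu⟩ := key u le_rfl hu1.le
  rw [hFTC, abs_le]
  constructor <;> linarith
end

section
/- There exists A₀ > 0 such that for all real a, b with a > 0, 0 < b < 1 and ab ≥ A₀, and for every u with 0 < u < 1, the quantity h₂(u) = ∫_u^1 (1/x)·((1 − bx)/√((1−x)(1 + bx/a)) − 1) dx satisfies |h₂(u)| ≤ 2 ln 2. -/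
open Real MeasureTheory intervalIntegral

lemma rpow_half_eq (t : ℝ) : t ^ (-(1/2) : ℝ) = 1 / Real.sqrt t := by
  rcases le_or_gt 0 t with ht | ht
  · rw [Real.rpow_neg ht, Real.sqrt_eq_rpow]
    norm_num
  · rw [Real.rpow_def_of_neg ht, Real.sqrt_eq_zero'.mpr ht.le]
    rw [show (-(1/2):ℝ) * π = -(π/2) by ring, Real.cos_neg, Real.cos_pi_div_two, mul_zero]
    norm_num

lemma intInt_isqrt (u : ℝ) : IntervalIntegrable (fun x => 1 / Real.sqrt (1 - x)) volume u 1 := by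
  have h := (intervalIntegrable_rpow' (r := (-(1/2):ℝ)) (by norm_num)).comp_sub_left (a := 0) (b := 1 - u) 1
  simp only [sub_zero, sub_sub_cancel] at h
  have h2 : (fun x : ℝ => (1 - x) ^ (-(1/2):ℝ)) = fun x => 1 / Real.sqrt (1 - x) := by
    funext x; rw [rpow_half_eq]
  rw [h2] at h
  exact h.symm

lemma int_isqrt (u : ℝ) :
    ∫ x in u..1, 1 / Real.sqrt (1 - x) = 2 * Real.sqrt (1 - u) := by
  have h2 : (fun x : ℝ => 1 / Real.sqrt (1 - x)) = fun x => (fun y : ℝ => y ^ (-(1/2):ℝ)) (1 - x) := by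
    funext x; exact (rpow_half_eq _).symm
  rw [h2]
  rw [integral_comp_sub_left (fun y : ℝ => y ^ (-(1/2):ℝ)) 1]
  rw [integral_rpow (Or.inl (by norm_num))]
  norm_num
  rw [Real.sqrt_eq_rpow]
  ring

lemma sqrt_one_sub_le_one {x : ℝ} (hx0 : 0 ≤ x) : Real.sqrt (1 - x) ≤ 1 := by
  exact Real.sqrt_le_one.mpr (by linarith)

lemma one_sub_le_sqrt {x : ℝ} (hx0 : 0 ≤ x) (hx1 : x ≤ 1) : 1 - x ≤ Real.sqrt (1 - x) := by
  have h2 := Real.sq_sqrt (show (0:ℝ) ≤ 1 - x by linarith)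
  have h3 := Real.sqrt_nonneg (1 - x)
  have h4 := sqrt_one_sub_le_one hx0
  nlinarith

lemma poly_ineq (b c t X : ℝ) (hb0 : 0 ≤ b) (hb1 : b ≤ 1) (hc : 0 ≤ c)
    (ht1 : 1 ≤ t) (ht2 : t ≤ 1 + b*c) (hX0 : 0 ≤ X) (hX1 : X ≤ 1) :
    (1 - X - c) * t ≤ 1 - b * X := by
  rcases le_or_gt 0 (1 - X - c) with h | h
  · nlinarith
  · nlinarith

lemma L1 (a b x : ℝ) (ha : 0 < a) (hb : 0 < b) (hb1 : b < 1) (hx0 : 0 < x) (hx1 : x ≤ 1) :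
    (1 - b*x)/Real.sqrt ((1-x)*(1+b*x/a)) - 1 ≤ (1 - Real.sqrt (1-x))/Real.sqrt (1-x) := by
  rcases eq_or_lt_of_le hx1 with hx1' | hx1'
  · subst hx1'; norm_num
  · have h1x : (0:ℝ) < 1 - x := by linarith
    have hs : 0 < Real.sqrt (1-x) := Real.sqrt_pos.mpr h1x
    have he : (0:ℝ) ≤ b*x/a := by positivity
    have hP : Real.sqrt (1-x) ≤ Real.sqrt ((1-x)*(1+b*x/a)) := by
      apply Real.sqrt_le_sqrt; nlinarith
    have h1 : (1-b*x)/Real.sqrt ((1-x)*(1+b*x/a)) ≤ 1/Real.sqrt (1-x) := by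
      apply div_le_div₀ (by norm_num) (by nlinarith) hs hP
    have h2 : (1 - Real.sqrt (1-x))/Real.sqrt (1-x) = 1/Real.sqrt (1-x) - 1 := by
      field_simp
    linarith

lemma L2 (a b x : ℝ) (ha : 0 < a) (hb : 0 < b) (hb1 : b < 1) (hx0 : 0 < x) (hx1 : x ≤ 1) :
    Real.sqrt (1-x) - 1 - (1/(2*a)) * (x / Real.sqrt (1-x))
      ≤ (1 - b*x)/Real.sqrt ((1-x)*(1+b*x/a)) - 1 := by
  rcases eq_or_lt_of_le hx1 with hx1' | hx1'
  · subst hx1'; norm_num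
  · have h1x : (0:ℝ) < 1 - x := by linarith
    have hs : 0 < Real.sqrt (1-x) := Real.sqrt_pos.mpr h1x
    have hs2 : Real.sqrt (1-x) ^ 2 = 1 - x := Real.sq_sqrt h1x.le
    set s := Real.sqrt (1-x) with hsdef
    set t := Real.sqrt (1 + b*x/a) with htdef
    have he : (0:ℝ) ≤ b*x/a := by positivity
    have ht1 : 1 ≤ t := by
      have h := Real.sqrt_le_sqrt (show (1:ℝ) ≤ 1 + b*x/a by linarith)
      rwa [Real.sqrt_one] at h
    have ht0 : 0 < t := lt_of_lt_of_le one_pos ht1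
    have ht2 : t ≤ 1 + b * (x/(2*a)) := by
      rw [htdef]
      have h0 : Real.sqrt ((1 + b*(x/(2*a)))^2) = 1 + b*(x/(2*a)) := by
        apply Real.sqrt_sq; positivity
      rw [← h0]
      apply Real.sqrt_le_sqrt
      have hxa : b*x/a = 2 * (b * (x/(2*a))) := by field_simp
      nlinarith [sq_nonneg (b*(x/(2*a)))]
    have hProd : Real.sqrt ((1-x)*(1+b*x/a)) = s * t := Real.sqrt_mul h1x.le _
    rw [hProd]
    have hst : 0 < s * t := mul_pos hs ht0
    set c := x/(2*a) with hcdef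
    have hc0 : (0:ℝ) ≤ c := by positivity
    have key : (1 - x - c) * t ≤ 1 - b * x :=
      poly_ineq b c t x hb.le hb1.le hc0 ht1 ht2 hx0.le hx1
    have e1 : s - 1 - (1/(2*a)) * (x / s) = (s^2 - c)/s - 1 := by
      rw [hcdef]; field_simp; ring
    rw [e1, hs2]
    have e2 : (1 - x - c)/s ≤ (1-b*x)/(s*t) := by
      rw [div_le_div_iff₀ hs hst]
      calc (1 - x - c) * (s * t) = ((1 - x - c) * t) * s := by ring
        _ ≤ (1 - b*x) * s := mul_le_mul_of_nonneg_right key hs.le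
    linarith

/-- pointwise: `Mp x ≤ 1/√(1-x)` on `(0,1]`, including junk value at `x = 1`. -/
lemma Mp_le_isqrt (x : ℝ) (hx0 : 0 < x) (hx1 : x ≤ 1) :
    (1/x) * ((1 - Real.sqrt (1-x))/Real.sqrt (1-x)) ≤ 1 / Real.sqrt (1-x) := by
  rcases eq_or_lt_of_le hx1 with hx1' | hx1'
  · subst hx1'; norm_num
  · have h1x : (0:ℝ) < 1 - x := by linarith
    have hs : 0 < Real.sqrt (1-x) := Real.sqrt_pos.mpr h1x
    have h1 : 1 - Real.sqrt (1-x) ≤ x := by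
      have := one_sub_le_sqrt hx0.le hx1; linarith
    have e : (1/x) * ((1 - Real.sqrt (1-x))/Real.sqrt (1-x))
        = (1 - Real.sqrt (1-x))/(x * Real.sqrt (1-x)) := by ring
    rw [e, div_le_div_iff₀ (by positivity) hs]
    nlinarith

lemma Mp_nonneg (x : ℝ) (hx0 : 0 < x) (hx1 : x ≤ 1) :
    0 ≤ (1/x) * ((1 - Real.sqrt (1-x))/Real.sqrt (1-x)) := by
  have h1 : Real.sqrt (1-x) ≤ 1 := sqrt_one_sub_le_one hx0.le
  have h2 : 0 ≤ Real.sqrt (1-x) := Real.sqrt_nonneg _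
  rcases eq_or_lt_of_le h2 with h | h
  · rw [← h]; norm_num
  · exact mul_nonneg (by positivity) (div_nonneg (by linarith) h.le)

lemma one_sub_sqrt_div_le_one (x : ℝ) (hx0 : 0 < x) (hx1 : x ≤ 1) :
    (1 - Real.sqrt (1-x))/x ≤ 1 := by
  rw [div_le_one hx0]
  have := one_sub_le_sqrt hx0.le hx1; linarith

lemma one_sub_sqrt_div_nonneg (x : ℝ) (hx0 : 0 < x) (hx1 : x ≤ 1) :
    0 ≤ (1 - Real.sqrt (1-x))/x := by
  apply div_nonneg _ hx0.le
  have := sqrt_one_sub_le_one hx0.le; linarith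

/-- integrability of the upper majorant on `u..1` -/
lemma MpInt (u v : ℝ) (hu : 0 < u) (huv : u ≤ v) (hv : v ≤ 1) :
    IntervalIntegrable (fun x => (1/x) * ((1 - Real.sqrt (1-x))/Real.sqrt (1-x))) volume u v := by
  apply IntervalIntegrable.mono_fun' ((intInt_isqrt u).mono_set (by
    rw [Set.uIcc_of_le huv, Set.uIcc_of_le (le_trans huv hv)]
    exact Set.Icc_subset_Icc le_rfl hv))
  · apply Measurable.aestronglyMeasurable
    have hm : Measurable (fun x : ℝ => Real.sqrt (1 - x)) :=
      Real.continuous_sqrt.measurable.comp (measurable_const.sub measurable_id)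
    exact (measurable_const.div measurable_id).mul
      ((measurable_const.sub hm).div hm)
  · rw [Filter.EventuallyLE, ae_restrict_iff' measurableSet_uIoc]
    apply Filter.Eventually.of_forall
    intro x hx
    rw [Set.uIoc_of_le huv] at hx
    have hx0 : 0 < x := lt_trans hu hx.1
    have hx1 : x ≤ 1 := le_trans hx.2 hv
    rw [Real.norm_eq_abs, abs_of_nonneg (Mp_nonneg x hx0 hx1)]
    exact Mp_le_isqrt x hx0 hx1

/-- `∫_u^1 Mp ≤ 2 log 2` -/
lemma MpBound (u : ℝ) (hu : 0 < u) (hu1 : u < 1) :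
    ∫ x in u..1, (1/x) * ((1 - Real.sqrt (1-x))/Real.sqrt (1-x)) ≤ 2 * Real.log 2 := by
  apply le_of_forall_pos_le_add
  intro ε hε
  set c : ℝ := max u (1 - (ε/2)^2) with hcdef
  have hc1 : c < 1 := by
    apply max_lt hu1; nlinarith
  have huc : u ≤ c := le_max_left _ _
  have hc0 : 0 < c := lt_of_lt_of_le hu huc
  have int1 : IntervalIntegrable (fun x => (1/x) * ((1 - Real.sqrt (1-x))/Real.sqrt (1-x))) volume u c :=
    MpInt u c hu huc hc1.le
  have int2 : IntervalIntegrable (fun x => (1/x) * ((1 - Real.sqrt (1-x))/Real.sqrt (1-x))) volume c 1 :=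
    MpInt c 1 hc0 hc1.le le_rfl
  rw [← integral_add_adjacent_intervals int1 int2]
  -- FTC on [u,c]
  have hFTC : ∫ x in u..c, (1/x) * ((1 - Real.sqrt (1-x))/Real.sqrt (1-x))
      = (-2 * Real.log (1 + Real.sqrt (1-c))) - (-2 * Real.log (1 + Real.sqrt (1-u))) := by
    apply integral_eq_sub_of_hasDerivAt (f := fun y => -2 * Real.log (1 + Real.sqrt (1 - y))) _ int1
    intro x hx
    rw [Set.uIcc_of_le huc] at hx
    have hx0 : 0 < x := lt_of_lt_of_le hu hx.1
    have hx1 : x < 1 := lt_of_le_of_lt hx.2 hc1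
    have h1x : (0:ℝ) < 1 - x := by linarith
    have hs : 0 < Real.sqrt (1-x) := Real.sqrt_pos.mpr h1x
    have hs2 : Real.sqrt (1-x) ^ 2 = 1 - x := Real.sq_sqrt h1x.le
    have d1 : HasDerivAt (fun y : ℝ => 1 - y) (-1) x := (hasDerivAt_id x).const_sub 1
    have d2 : HasDerivAt (fun y : ℝ => Real.sqrt (1 - y)) (1/(2*Real.sqrt (1-x)) * (-1)) x :=
      (Real.hasDerivAt_sqrt (ne_of_gt h1x)).comp x d1
    have d3 : HasDerivAt (fun y : ℝ => 1 + Real.sqrt (1 - y)) (1/(2*Real.sqrt (1-x)) * (-1)) x :=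
      d2.const_add 1
    have d4 : HasDerivAt (fun y : ℝ => Real.log (1 + Real.sqrt (1 - y)))
        ((1/(2*Real.sqrt (1-x)) * (-1)) / (1 + Real.sqrt (1-x))) x :=
      d3.log (by positivity)
    have d5 := d4.const_mul (-2 : ℝ)
    refine d5.congr_deriv ?_
    have hnum : (1 - Real.sqrt (1-x)) * (1 + Real.sqrt (1-x)) = x := by nlinarith
    field_simp
    nlinarith [hnum]
  have hEnd : ∫ x in c..1, (1/x) * ((1 - Real.sqrt (1-x))/Real.sqrt (1-x)) ≤ ε := by
    have hmono : ∫ x in c..1, (1/x) * ((1 - Real.sqrt (1-x))/Real.sqrt (1-x))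
        ≤ ∫ x in c..1, 1 / Real.sqrt (1-x) := by
      apply integral_mono_on hc1.le int2 (intInt_isqrt c)
      intro x hx
      exact Mp_le_isqrt x (lt_of_lt_of_le hc0 hx.1) hx.2
    rw [int_isqrt c] at hmono
    have h1c : Real.sqrt (1 - c) ≤ ε/2 := by
      have h : 1 - c ≤ (ε/2)^2 := by
        have := le_max_right u (1 - (ε/2)^2); linarith
      calc Real.sqrt (1 - c) ≤ Real.sqrt ((ε/2)^2) := Real.sqrt_le_sqrt h
        _ = ε/2 := Real.sqrt_sq (by positivity)
    linarith
  have hFirst : (-2 * Real.log (1 + Real.sqrt (1-c))) - (-2 * Real.log (1 + Real.sqrt (1-u)))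
      ≤ 2 * Real.log 2 := by
    have h1 : Real.log (1 + Real.sqrt (1-u)) ≤ Real.log 2 := by
      apply Real.log_le_log (by positivity)
      have := sqrt_one_sub_le_one hu.le; linarith
    have h2 : 0 ≤ Real.log (1 + Real.sqrt (1-c)) :=
      Real.log_nonneg (by nlinarith [Real.sqrt_nonneg (1-c)])
    nlinarith
  rw [hFTC]
  linarith

lemma MmInt (a u : ℝ) (ha : 0 < a) (hu : 0 < u) (hu1 : u ≤ 1) :
    IntervalIntegrable (fun x => (1 - Real.sqrt (1-x))/x + (1/(2*a)) * (1/Real.sqrt (1-x)))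
      volume u 1 := by
  apply IntervalIntegrable.add
  · apply IntervalIntegrable.mono_fun' (g := fun _ => (1:ℝ)) intervalIntegrable_const
    · apply Measurable.aestronglyMeasurable
      have hm : Measurable (fun x : ℝ => Real.sqrt (1 - x)) :=
        Real.continuous_sqrt.measurable.comp (measurable_const.sub measurable_id)
      exact (measurable_const.sub hm).div measurable_id
    · rw [Filter.EventuallyLE, ae_restrict_iff' measurableSet_uIoc]
      apply Filter.Eventually.of_forall
      intro x hx
      rw [Set.uIoc_of_le hu1] at hx
      have hx0 : 0 < x := lt_trans hu hx.1
      rw [Real.norm_eq_abs, abs_of_nonneg (one_sub_sqrt_div_nonneg x hx0 hx.2)]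
      exact one_sub_sqrt_div_le_one x hx0 hx.2
  · exact (intInt_isqrt u).const_mul _

lemma MmBound (a u : ℝ) (ha : 4 ≤ a) (hu : 0 < u) (hu1 : u < 1) :
    ∫ x in u..1, ((1 - Real.sqrt (1-x))/x + (1/(2*a)) * (1/Real.sqrt (1-x)))
      ≤ 2 * Real.log 2 := by
  have ha0 : (0:ℝ) < a := by linarith
  have int1 : IntervalIntegrable (fun x => (1 - Real.sqrt (1-x))/x) volume u 1 := by
    apply IntervalIntegrable.mono_fun' (g := fun _ => (1:ℝ)) intervalIntegrable_const
    · apply Measurable.aestronglyMeasurable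
      have hm : Measurable (fun x : ℝ => Real.sqrt (1 - x)) :=
        Real.continuous_sqrt.measurable.comp (measurable_const.sub measurable_id)
      exact (measurable_const.sub hm).div measurable_id
    · rw [Filter.EventuallyLE, ae_restrict_iff' measurableSet_uIoc]
      apply Filter.Eventually.of_forall
      intro x hx
      rw [Set.uIoc_of_le hu1.le] at hx
      have hx0 : 0 < x := lt_trans hu hx.1
      rw [Real.norm_eq_abs, abs_of_nonneg (one_sub_sqrt_div_nonneg x hx0 hx.2)]
      exact one_sub_sqrt_div_le_one x hx0 hx.2
  have int2 : IntervalIntegrable (fun x => (1/(2*a)) * (1/Real.sqrt (1-x))) volume u 1 :=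
    (intInt_isqrt u).const_mul _
  rw [integral_add int1 int2]
  have b1 : ∫ x in u..1, (1 - Real.sqrt (1-x))/x ≤ 1 - u := by
    have h := integral_mono_on hu1.le int1 (_root_.intervalIntegrable_const (c := (1:ℝ)))
      (fun x hx => one_sub_sqrt_div_le_one x (lt_of_lt_of_le hu hx.1) hx.2)
    simpa using h
  have b2 : ∫ x in u..1, (1/(2*a)) * (1/Real.sqrt (1-x)) ≤ 1/4 := by
    rw [intervalIntegral.integral_const_mul, int_isqrt u]
    have hs1 : Real.sqrt (1 - u) ≤ 1 := Real.sqrt_le_one.mpr (by linarith)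
    have hs0 : 0 ≤ Real.sqrt (1 - u) := Real.sqrt_nonneg _
    rw [div_mul_eq_mul_div, one_mul]
    rw [div_le_iff₀ (by linarith)]
    nlinarith
  have hlog := Real.log_two_gt_d9
  nlinarith

/-- Bound on the function `h₂`: for `ab` large enough and every `u ∈ (0,1)`,
`|∫_u^1 (1/x)·((1−bx)/√((1−x)(1+bx/a)) − 1) dx| ≤ 2·ln 2`. -/
theorem h2_bound :
    ∃ A₀ > (0 : ℝ), ∀ a b : ℝ, 0 < a → 0 < b → b < 1 → A₀ ≤ a * b →
      ∀ u : ℝ, 0 < u → u < 1 →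
        |∫ x in u..1,
            (1 / x) * ((1 - b * x) / Real.sqrt ((1 - x) * (1 + b * x / a)) - 1)| ≤
          2 * Real.log 2 := by
  refine ⟨4, by norm_num, ?_⟩
  intro a b ha hb hb1 hab u hu hu1
  have ha4 : (4:ℝ) ≤ a := by nlinarith
  set f : ℝ → ℝ := fun x => (1 / x) * ((1 - b * x) / Real.sqrt ((1 - x) * (1 + b * x / a)) - 1)
    with hfdef
  set Mp : ℝ → ℝ := fun x => (1/x) * ((1 - Real.sqrt (1-x))/Real.sqrt (1-x)) with hMpdef
  set Mm : ℝ → ℝ := fun x => (1 - Real.sqrt (1-x))/x + (1/(2*a)) * (1/Real.sqrt (1-x)) with hMmdef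
  -- pointwise bounds on (0,1]
  have hup : ∀ x : ℝ, 0 < x → x ≤ 1 → f x ≤ Mp x := by
    intro x hx0 hx1
    exact mul_le_mul_of_nonneg_left (L1 a b x ha hb hb1 hx0 hx1) (by positivity)
  have hlo : ∀ x : ℝ, 0 < x → x ≤ 1 → -f x ≤ Mm x := by
    intro x hx0 hx1
    have h := L2 a b x ha hb hb1 hx0 hx1
    have h2 := mul_le_mul_of_nonneg_left (neg_le_neg h) (show (0:ℝ) ≤ 1/x by positivity)
    have hxs : (1/x) * (x / Real.sqrt (1-x)) = 1 / Real.sqrt (1-x) := by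
      rcases eq_or_lt_of_le (Real.sqrt_nonneg (1-x)) with hs | hs
      · rw [← hs]; simp
      · field_simp
    have e1 : (1/x) * (-((1 - b*x)/Real.sqrt ((1-x)*(1+b*x/a)) - 1)) = -f x := by
      rw [hfdef]; ring
    have e2 : (1/x) * (-(Real.sqrt (1-x) - 1 - (1/(2*a)) * (x / Real.sqrt (1-x)))) = Mm x := by
      rw [hMmdef]
      have : (1/x) * (-(Real.sqrt (1-x) - 1 - (1/(2*a)) * (x / Real.sqrt (1-x))))
          = (1 - Real.sqrt (1-x))/x + (1/(2*a)) * ((1/x) * (x / Real.sqrt (1-x))) := by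
        ring
      rw [this, hxs]
    rw [e1, e2] at h2
    exact h2
  have hMmnn : ∀ x : ℝ, 0 < x → x ≤ 1 → 0 ≤ Mm x := by
    intro x hx0 hx1
    have h1 := one_sub_sqrt_div_nonneg x hx0 hx1
    have h2 : (0:ℝ) ≤ (1/(2*a)) * (1/Real.sqrt (1-x)) := by positivity
    rw [hMmdef]; dsimp only; linarith
  have hMpnn : ∀ x : ℝ, 0 < x → x ≤ 1 → 0 ≤ Mp x := fun x h1 h2 => Mp_nonneg x h1 h2
  -- integrability of f
  have hMpInt := MpInt u 1 hu hu1.le le_rfl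
  have hMmInt := MmInt a u (by linarith) hu hu1.le
  have hfInt : IntervalIntegrable f volume u 1 := by
    apply IntervalIntegrable.mono_fun' (g := fun x => Mp x + Mm x) (hMpInt.add hMmInt)
    · apply Measurable.aestronglyMeasurable
      have hm : Measurable (fun x : ℝ => Real.sqrt ((1-x)*(1+b*x/a))) :=
        Real.continuous_sqrt.measurable.comp
          ((measurable_const.sub measurable_id).mul
            (measurable_const.add ((measurable_id.const_mul b).div_const a)))
      exact (measurable_const.div measurable_id).mul
        (((measurable_const.sub (measurable_id.const_mul b)).div hm).sub measurable_const)
    · rw [Filter.EventuallyLE, ae_restrict_iff' measurableSet_uIoc]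
      apply Filter.Eventually.of_forall
      intro x hx
      rw [Set.uIoc_of_le hu1.le] at hx
      have hx0 : 0 < x := lt_trans hu hx.1
      rw [Real.norm_eq_abs]
      rw [abs_le]
      constructor
      · have := hlo x hx0 hx.2
        have := hMpnn x hx0 hx.2
        linarith
      · have := hup x hx0 hx.2
        have := hMmnn x hx0 hx.2
        linarith
  -- conclude
  have hUp : ∫ x in u..1, f x ≤ 2 * Real.log 2 := by
    calc ∫ x in u..1, f x ≤ ∫ x in u..1, Mp x :=
          integral_mono_on hu1.le hfInt hMpInt
            (fun x hx => hup x (lt_of_lt_of_le hu hx.1) hx.2)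
      _ ≤ 2 * Real.log 2 := MpBound u hu hu1
  have hLo : -(∫ x in u..1, f x) ≤ 2 * Real.log 2 := by
    have h1 : ∫ x in u..1, -f x ≤ ∫ x in u..1, Mm x :=
      integral_mono_on hu1.le hfInt.neg hMmInt
        (fun x hx => hlo x (lt_of_lt_of_le hu hx.1) hx.2)
    rw [intervalIntegral.integral_neg] at h1
    calc -(∫ x in u..1, f x) ≤ ∫ x in u..1, Mm x := h1
      _ ≤ 2 * Real.log 2 := MmBound a u ha4 hu hu1
  rw [abs_le]
  exact ⟨by linarith, hUp⟩
end

section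
/- There exists A₀ > 0 such that for all real a, b, c with a > 0, 0 < b < 1, 0 < c < a and ab ≥ A₀, the quantity h(c) = ∫_0^1 (1/√(x(x + c/b)))·((1 − bx)/√((1−x)(1 + bx/a)) − 1) dx satisfies |h(c)| ≤ 2 ln 2. -/
open Real MeasureTheory intervalIntegral Set

/-- `1/√(1-x)` is interval integrable on `[0,1]`. -/
lemma dz_hI1 : IntervalIntegrable (fun x : ℝ => 1 / Real.sqrt (1 - x)) volume 0 1 := by
  have hr : IntervalIntegrable (fun x : ℝ => x ^ (-(1/2) : ℝ)) volume 0 1 :=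
    intervalIntegral.intervalIntegrable_rpow' (by norm_num)
  have hcomp : IntervalIntegrable (fun x : ℝ => (1 - x) ^ (-(1/2) : ℝ)) volume 0 1 := by
    have := (hr.comp_sub_left 1).symm
    simpa using this
  refine hcomp.mono_fun ?_ (Filter.Eventually.of_forall fun x => ?_)
  · refine Measurable.aestronglyMeasurable ?_
    simp only [one_div]
    exact ((Real.continuous_sqrt.comp (continuous_const.sub continuous_id)).measurable).inv
  · rcases le_or_gt (1 - x) 0 with h | h
    · simp only [Real.sqrt_eq_zero_of_nonpos h, div_zero, norm_zero]
      exact norm_nonneg _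
    · simp only
      rw [Real.sqrt_eq_rpow, one_div, ← Real.rpow_neg h.le]

/-- `∫₀¹ 1/√(1-x) = 2`. -/
lemma dz_int1 : (∫ x in (0:ℝ)..1, 1 / Real.sqrt (1 - x)) = 2 := by
  have h := intervalIntegral.integral_eq_sub_of_hasDeriv_right_of_le
    (f := fun y : ℝ => -2 * Real.sqrt (1 - y)) (f' := fun x : ℝ => 1 / Real.sqrt (1 - x))
    zero_le_one
    (by
      apply Continuous.continuousOn
      exact (continuous_const.mul (Real.continuous_sqrt.comp (continuous_const.sub continuous_id))))
    (fun x hx => by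
      have h1x : 0 < 1 - x := by simpa using hx.2
      have hd : HasDerivAt (fun y : ℝ => Real.sqrt (1 - y)) (1 / (2 * Real.sqrt (1 - x)) * (-1)) x := by
        exact (Real.hasDerivAt_sqrt h1x.ne').comp x ((hasDerivAt_id x).const_sub 1)
      have := hd.const_mul (-2)
      have ht : Real.sqrt (1 - x) ≠ 0 := by positivity
      convert this.hasDerivWithinAt using 1
      field_simp)
    dz_hI1
  rw [h]
  simp

/-- `g₁ = 1/(√(1-x)(1+√(1-x)))` is interval integrable on `[0,1]`. -/
lemma dz_hIg1 : IntervalIntegrable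
    (fun x : ℝ => 1 / (Real.sqrt (1 - x) * (1 + Real.sqrt (1 - x)))) volume 0 1 := by
  refine dz_hI1.mono_fun ?_ (Filter.Eventually.of_forall fun x => ?_)
  · refine Measurable.aestronglyMeasurable ?_
    have hm : Measurable fun x : ℝ => Real.sqrt (1 - x) :=
      (Real.continuous_sqrt.comp (continuous_const.sub continuous_id)).measurable
    simp only [one_div]
    exact (hm.mul (measurable_const.add hm)).inv
  · simp only [Real.norm_eq_abs]
    have hs : 0 ≤ Real.sqrt (1 - x) := Real.sqrt_nonneg _
    rw [abs_of_nonneg (by positivity), abs_of_nonneg (by positivity)]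
    rcases eq_or_lt_of_le hs with h0 | h0
    · rw [← h0]
      norm_num
    · apply one_div_le_one_div_of_le h0
      nlinarith

/-- `∫₀¹ 1/(√(1-x)(1+√(1-x))) = 2 log 2`. -/
lemma dz_intg1 : (∫ x in (0:ℝ)..1, 1 / (Real.sqrt (1 - x) * (1 + Real.sqrt (1 - x))))
    = 2 * Real.log 2 := by
  have h := intervalIntegral.integral_eq_sub_of_hasDeriv_right_of_le
    (f := fun y : ℝ => -2 * Real.log (1 + Real.sqrt (1 - y)))
    (f' := fun x : ℝ => 1 / (Real.sqrt (1 - x) * (1 + Real.sqrt (1 - x))))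
    zero_le_one
    (by
      have hc : Continuous fun y : ℝ => 1 + Real.sqrt (1 - y) :=
        continuous_const.add (Real.continuous_sqrt.comp (continuous_const.sub continuous_id))
      have hlog : ContinuousOn (fun y : ℝ => Real.log (1 + Real.sqrt (1 - y))) (Icc 0 1) :=
        fun y _ => ((Real.continuousAt_log (by positivity)).comp hc.continuousAt).continuousWithinAt
      exact continuousOn_const.mul hlog)
    (fun x hx => by
      have h1x : 0 < 1 - x := by simpa using hx.2
      have ht : 0 < Real.sqrt (1 - x) := Real.sqrt_pos.mpr h1x
      have hd : HasDerivAt (fun y : ℝ => Real.sqrt (1 - y)) (1 / (2 * Real.sqrt (1 - x)) * (-1)) x :=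
        (Real.hasDerivAt_sqrt h1x.ne').comp x ((hasDerivAt_id x).const_sub 1)
      have hd2 : HasDerivAt (fun y : ℝ => 1 + Real.sqrt (1 - y)) (1 / (2 * Real.sqrt (1 - x)) * (-1)) x :=
        hd.const_add 1
      have hne : (1 : ℝ) + Real.sqrt (1 - x) ≠ 0 := by positivity
      have hd3 := (hd2.log hne).const_mul (-2 : ℝ)
      convert hd3.hasDerivWithinAt using 1
      field_simp)
    dz_hIg1
  rw [h]
  simp only [Real.sqrt_zero, Real.sqrt_one, sub_self, add_zero, Real.log_one]
  norm_num

/-- Pointwise upper bound: `f x ≤ g₁ x` on `[0,1]`. -/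
lemma dz_ptwise1 (a b c : ℝ) (ha : 0 < a) (hb : 0 < b) (hb1 : b < 1) (hc : 0 < c)
    {x : ℝ} (hx : x ∈ Set.Icc (0:ℝ) 1) :
    (1 / Real.sqrt (x * (x + c / b))) *
      ((1 - b * x) / Real.sqrt ((1 - x) * (1 + b * x / a)) - 1)
      ≤ 1 / (Real.sqrt (1 - x) * (1 + Real.sqrt (1 - x))) := by
  obtain ⟨hx0, hx1⟩ := hx
  rcases hx0.eq_or_lt with h0 | h0
  · rw [← h0]
    norm_num
  rcases hx1.eq_or_lt with h1 | h1
  · subst h1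
    have h2 : Real.sqrt ((1 - 1) * (1 + b * 1 / a)) = 0 := by norm_num
    have h3 : Real.sqrt (1 - 1) = 0 := by norm_num
    rw [h2, h3, div_zero]
    have : (0 : ℝ) - 1 ≤ 0 := by norm_num
    have h4 : 0 ≤ 1 / Real.sqrt (1 * (1 + c / b)) := by positivity
    nlinarith [mul_nonpos_of_nonneg_of_nonpos h4 this]
  -- interior case
  have h1x : 0 < 1 - x := by linarith
  set t := Real.sqrt (1 - x) with ht_def
  have ht : 0 < t := Real.sqrt_pos.mpr h1x
  have ht2 : t ^ 2 = 1 - x := Real.sq_sqrt h1x.le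
  have ht1 : t < 1 := by nlinarith
  set D := Real.sqrt ((1 - x) * (1 + b * x / a)) with hD_def
  have hbxa : 0 ≤ b * x / a := by positivity
  have hD_ge : t ≤ D := Real.sqrt_le_sqrt (by nlinarith)
  have hD : 0 < D := lt_of_lt_of_le ht hD_ge
  have hbx : b * x < 1 := by nlinarith
  have hP_le : 1 / Real.sqrt (x * (x + c / b)) ≤ 1 / x := by
    apply one_div_le_one_div_of_le h0
    have hcb : 0 < c / b := by positivity
    nlinarith [Real.sq_sqrt (show (0:ℝ) ≤ x * (x + c / b) by nlinarith),
      Real.sqrt_nonneg (x * (x + c / b))]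
  have hP_pos : 0 < 1 / Real.sqrt (x * (x + c / b)) := by
    have : 0 < c / b := by positivity
    have : 0 < x * (x + c / b) := by nlinarith
    positivity
  rcases le_or_gt ((1 - b * x) / D - 1) 0 with hs | hs
  · have := mul_nonpos_of_nonneg_of_nonpos hP_pos.le hs
    have hg : 0 ≤ 1 / (t * (1 + t)) := by positivity
    linarith
  · have key : (1 - b * x) / D ≤ 1 / t := by
      apply div_le_div₀ (by norm_num) (by nlinarith) ht hD_ge
    calc (1 / Real.sqrt (x * (x + c / b))) * ((1 - b * x) / D - 1)
        ≤ (1 / x) * ((1 - b * x) / D - 1) := mul_le_mul_of_nonneg_right hP_le hs.le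
      _ ≤ (1 / x) * (1 / t - 1) := by
          apply mul_le_mul_of_nonneg_left (by linarith) (by positivity)
      _ = 1 / (t * (1 + t)) := by
          have hx_eq : x = (1 - t) * (1 + t) := by nlinarith
          rw [hx_eq]
          have h1t : (1 : ℝ) - t ≠ 0 := by nlinarith
          have h1t' : (1 : ℝ) + t ≠ 0 := by nlinarith
          field_simp

set_option maxHeartbeats 1000000 in
/-- Pointwise lower bound: `-f x ≤ g₂ x` on `[0,1]`. -/
lemma dz_ptwise2 (a b c : ℝ) (ha : 0 < a) (hb : 0 < b) (hb1 : b < 1) (hc : 0 < c)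
    {x : ℝ} (hx : x ∈ Set.Icc (0:ℝ) 1) :
    -((1 / Real.sqrt (x * (x + c / b))) *
      ((1 - b * x) / Real.sqrt ((1 - x) * (1 + b * x / a)) - 1))
      ≤ 1 / (1 + Real.sqrt (1 - x)) + (b / (2 * a)) * (1 / Real.sqrt (1 - x)) := by
  obtain ⟨hx0, hx1⟩ := hx
  rcases hx0.eq_or_lt with h0 | h0
  · rw [← h0]
    norm_num
    positivity
  rcases hx1.eq_or_lt with h1 | h1
  · subst h1
    have h2 : Real.sqrt ((1 - 1) * (1 + b * 1 / a)) = 0 := by norm_num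
    have h3 : Real.sqrt (1 - 1) = 0 := by norm_num
    rw [h2, h3, div_zero]
    have h5 : (1:ℝ) ≤ Real.sqrt (1 * (1 + c / b)) := by
      have hcb : 0 < c / b := by positivity
      nlinarith [Real.sq_sqrt (show (0:ℝ) ≤ 1 * (1 + c / b) by nlinarith),
        Real.sqrt_nonneg (1 * (1 + c / b))]
    have h6 : 1 / Real.sqrt (1 * (1 + c / b)) ≤ 1 := by
      rw [div_le_one (by linarith)]
      linarith
    have heq : -(1 / Real.sqrt (1 * (1 + c / b)) * (0 - 1))
        = 1 / Real.sqrt (1 * (1 + c / b)) := by ring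
    rw [heq]
    have hz : (1:ℝ) / 0 = 0 := div_zero 1
    rw [hz, mul_zero, add_zero]
    calc 1 / Real.sqrt (1 * (1 + c / b)) ≤ 1 := h6
      _ ≤ 1 / (1 + 0) := by norm_num
  -- interior case
  have h1x : 0 < 1 - x := by linarith
  have hbxa : 0 ≤ b * x / a := by positivity
  rw [Real.sqrt_mul h1x.le]
  obtain ⟨t, ht_def⟩ : ∃ t, Real.sqrt (1 - x) = t := ⟨_, rfl⟩
  obtain ⟨s, hs_def⟩ : ∃ s, Real.sqrt (1 + b * x / a) = s := ⟨_, rfl⟩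
  rw [ht_def, hs_def]
  have ht : 0 < t := ht_def ▸ Real.sqrt_pos.mpr h1x
  have ht2 : t ^ 2 = 1 - x := ht_def ▸ Real.sq_sqrt h1x.le
  have ht1 : t < 1 := by nlinarith
  have hs1 : 1 ≤ s := by
    have := Real.sq_sqrt (show (0:ℝ) ≤ 1 + b * x / a by linarith)
    have h2 := Real.sqrt_nonneg (1 + b * x / a)
    rw [hs_def] at this h2
    nlinarith
  have hs2 : s ^ 2 = 1 + b * x / a := hs_def ▸ Real.sq_sqrt (by linarith)
  have hD : 0 < t * s := by positivity
  have hbx : b * x < 1 := by nlinarith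
  have hP_le : 1 / Real.sqrt (x * (x + c / b)) ≤ 1 / x := by
    apply one_div_le_one_div_of_le h0
    have hcb : 0 < c / b := by positivity
    nlinarith [Real.sq_sqrt (show (0:ℝ) ≤ x * (x + c / b) by nlinarith),
      Real.sqrt_nonneg (x * (x + c / b))]
  have hP_pos : 0 < 1 / Real.sqrt (x * (x + c / b)) := by
    have hcb : 0 < c / b := by positivity
    have : 0 < x * (x + c / b) := by nlinarith
    positivity
  have hg2_pos : 0 ≤ 1 / (1 + t) + (b / (2 * a)) * (1 / t) := by positivity
  rcases le_or_gt (1 - (1 - b * x) / (t * s)) 0 with hneg | hpos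
  · have heq : -((1 / Real.sqrt (x * (x + c / b))) * ((1 - b * x) / (t * s) - 1))
        = (1 / Real.sqrt (x * (x + c / b))) * (1 - (1 - b * x) / (t * s)) := by ring
    rw [heq]
    have := mul_nonpos_of_nonneg_of_nonpos hP_pos.le hneg
    linarith
  · -- main estimate
    have step1 : 1 - (1 - b * x) / (t * s) ≤ (1 - (1 - b * x) / t) + (b * x / (2 * a)) * (1 / t) := by
      have hmono : (1 - b * x) * (1 / t - 1 / (t * s)) ≤ 1 * (1 / t - 1 / (t * s)) := by
        apply mul_le_mul_of_nonneg_right (by nlinarith)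
        have : 1 / (t * s) ≤ 1 / t := by
          apply one_div_le_one_div_of_le ht
          nlinarith
        linarith
      have hkey : 1 / t - 1 / (t * s) ≤ (b * x / a / 2) * (1 / t) := by
        have hs0 : 0 < s := by linarith
        have h1 : 1 / t - 1 / (t * s) = (1 / t) * (1 - 1 / s) := by
          field_simp
        have h2 : 1 - 1 / s ≤ (b * x / a) / 2 := by
          have he : 1 - 1 / s = (s - 1) / s := by field_simp
          rw [he, div_le_iff₀ hs0]
          nlinarith [sq_nonneg (s - 1)]
        calc 1 / t - 1 / (t * s) = (1 / t) * (1 - 1 / s) := h1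
          _ ≤ (1 / t) * ((b * x / a) / 2) := by
              apply mul_le_mul_of_nonneg_left h2 (by positivity)
          _ = (b * x / a / 2) * (1 / t) := by ring
      have hexp : 1 - (1 - b * x) / (t * s)
          = (1 - (1 - b * x) / t) + (1 - b * x) * (1 / t - 1 / (t * s)) := by
        field_simp
        ring
      rw [hexp]
      have : (1 - b * x) * (1 / t - 1 / (t * s)) ≤ (b * x / (2 * a)) * (1 / t) := by
        calc (1 - b * x) * (1 / t - 1 / (t * s)) ≤ 1 * (1 / t - 1 / (t * s)) := hmono
          _ = 1 / t - 1 / (t * s) := by ring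
          _ ≤ (b * x / a / 2) * (1 / t) := hkey
          _ = (b * x / (2 * a)) * (1 / t) := by ring
      linarith
    have step2 : (1 / x) * ((1 - (1 - b * x) / t) + (b * x / (2 * a)) * (1 / t))
        ≤ 1 / (1 + t) + (b / (2 * a)) * (1 / t) := by
      have hA : (1 / x) * (1 - (1 - b * x) / t) ≤ 1 / (1 + t) := by
        have h1 : 1 - (1 - b * x) / t ≤ 1 - (1 - x) / t := by
          apply sub_le_sub_left
          exact (div_le_div_iff_of_pos_right ht).mpr (by nlinarith)
        have h2 : (1 / x) * (1 - (1 - x) / t) = 1 / (1 + t) := by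
          have e1 : (1 - x) / t = t := by
            rw [← ht2, sq, mul_div_assoc, div_self ht.ne', mul_one]
          rw [e1, div_mul_eq_mul_div, one_mul, div_eq_div_iff h0.ne' (by positivity)]
          linear_combination (-1 : ℝ) * ht2
        calc (1 / x) * (1 - (1 - b * x) / t) ≤ (1 / x) * (1 - (1 - x) / t) := by
              apply mul_le_mul_of_nonneg_left h1 (by positivity)
          _ = 1 / (1 + t) := h2
      have hB : (1 / x) * ((b * x / (2 * a)) * (1 / t)) = (b / (2 * a)) * (1 / t) := by
        field_simp
      calc (1 / x) * ((1 - (1 - b * x) / t) + (b * x / (2 * a)) * (1 / t))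
          = (1 / x) * (1 - (1 - b * x) / t) + (1 / x) * ((b * x / (2 * a)) * (1 / t)) := by ring
        _ ≤ 1 / (1 + t) + (b / (2 * a)) * (1 / t) := by rw [hB]; linarith
    have heq : -((1 / Real.sqrt (x * (x + c / b))) * ((1 - b * x) / (t * s) - 1))
        = (1 / Real.sqrt (x * (x + c / b))) * (1 - (1 - b * x) / (t * s)) := by ring
    rw [heq]
    calc (1 / Real.sqrt (x * (x + c / b))) * (1 - (1 - b * x) / (t * s))
        ≤ (1 / x) * (1 - (1 - b * x) / (t * s)) := mul_le_mul_of_nonneg_right hP_le hpos.le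
      _ ≤ (1 / x) * ((1 - (1 - b * x) / t) + (b * x / (2 * a)) * (1 / t)) := by
          apply mul_le_mul_of_nonneg_left step1 (by positivity)
      _ ≤ 1 / (1 + t) + (b / (2 * a)) * (1 / t) := step2

/-- Bound on the function `h` in the Dzhanibekov analysis: for `ab` large
enough, `|∫_0^1 (1/√(x(x+c/b)))·((1−bx)/√((1−x)(1+bx/a)) − 1) dx| ≤ 2·ln 2`. -/
theorem dzhanibekov_h_bound :
    ∃ A₀ > (0 : ℝ), ∀ a b c : ℝ,
      0 < a → 0 < b → b < 1 → 0 < c → c < a → A₀ ≤ a * b →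
      |∫ x in (0 : ℝ)..1,
          (1 / Real.sqrt (x * (x + c / b))) *
            ((1 - b * x) / Real.sqrt ((1 - x) * (1 + b * x / a)) - 1)| ≤
        2 * Real.log 2 := by
  refine ⟨10, by norm_num, ?_⟩
  intro a b c ha hb hb1 hc hca hab
  have hlog : (1.38 : ℝ) ≤ 2 * Real.log 2 := by
    nlinarith [Real.log_two_gt_d9]
  by_cases hInt : IntervalIntegrable (fun x : ℝ => (1 / Real.sqrt (x * (x + c / b))) *
      ((1 - b * x) / Real.sqrt ((1 - x) * (1 + b * x / a)) - 1)) volume 0 1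
  · have hcont1 : Continuous fun x : ℝ => 1 / (1 + Real.sqrt (1 - x)) := by
      apply Continuous.div continuous_const
        (continuous_const.add (Real.continuous_sqrt.comp (continuous_const.sub continuous_id)))
      intro x
      show (1 : ℝ) + Real.sqrt (1 - x) ≠ 0
      positivity
    have hIg2 : IntervalIntegrable (fun x : ℝ =>
        1 / (1 + Real.sqrt (1 - x)) + (b / (2 * a)) * (1 / Real.sqrt (1 - x))) volume 0 1 :=
      (hcont1.intervalIntegrable 0 1).add (dz_hI1.const_mul _)
    have h1 : (∫ x in (0:ℝ)..1, (1 / Real.sqrt (x * (x + c / b))) *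
        ((1 - b * x) / Real.sqrt ((1 - x) * (1 + b * x / a)) - 1)) ≤ 2 * Real.log 2 := by
      have hm := intervalIntegral.integral_mono_on zero_le_one hInt dz_hIg1
        (fun x hx => dz_ptwise1 a b c ha hb hb1 hc hx)
      rw [dz_intg1] at hm
      exact hm
    have h2 : -(∫ x in (0:ℝ)..1, (1 / Real.sqrt (x * (x + c / b))) *
        ((1 - b * x) / Real.sqrt ((1 - x) * (1 + b * x / a)) - 1)) ≤ 2 * Real.log 2 := by
      have hm := intervalIntegral.integral_mono_on zero_le_one hInt.neg hIg2
        (fun x hx => dz_ptwise2 a b c ha hb hb1 hc hx)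
      simp only [Pi.neg_apply] at hm
      rw [intervalIntegral.integral_neg] at hm
      have hsplit : (∫ x in (0:ℝ)..1,
          (1 / (1 + Real.sqrt (1 - x)) + (b / (2 * a)) * (1 / Real.sqrt (1 - x))))
          = (∫ x in (0:ℝ)..1, 1 / (1 + Real.sqrt (1 - x))) + (b / (2 * a)) * 2 := by
        rw [intervalIntegral.integral_add (hcont1.intervalIntegrable 0 1) (dz_hI1.const_mul _),
          intervalIntegral.integral_const_mul, dz_int1]
      have hfirst : (∫ x in (0:ℝ)..1, 1 / (1 + Real.sqrt (1 - x))) ≤ 1 := by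
        have hm2 := intervalIntegral.integral_mono_on (μ := volume) (f := fun x : ℝ => 1 / (1 + Real.sqrt (1 - x)))
          (g := fun _ : ℝ => (1:ℝ)) zero_le_one (hcont1.intervalIntegrable 0 1)
          intervalIntegrable_const
          (fun x _ => by
            rw [div_le_one (by positivity)]
            nlinarith [Real.sqrt_nonneg (1 - x)])
        simpa using hm2
      have hba : (b / (2 * a)) * 2 ≤ 1 / 10 := by
        have : (b / (2 * a)) * 2 = b / a := by field_simp
        rw [this, div_le_div_iff₀ ha (by norm_num)]
        nlinarith
      rw [hsplit] at hm
      linarith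
    rw [abs_le]
    constructor <;> linarith
  · rw [intervalIntegral.integral_undef hInt, abs_zero]
    linarith
end

section
/- Fix real a > 0 and 0 < b < 1. Then the Dzhanibekov precession angle Δφ(c) = ∫_{−π/2}^{π/2} (1 − b cos²ψ)/√((a + b cos²ψ)(c + b cos²ψ)) dψ tends to +∞ as c tends to 0 from the right. -/
open Real MeasureTheory intervalIntegral Filter

lemma aux_sqrt_add_le (x y : ℝ) (hx : 0 ≤ x) (hy : 0 ≤ y) :
    Real.sqrt (x + y) ≤ Real.sqrt x + Real.sqrt y := by
  have h : Real.sqrt (x + y) ≤ Real.sqrt ((Real.sqrt x + Real.sqrt y) ^ 2) :=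
    Real.sqrt_le_sqrt (by nlinarith [Real.sq_sqrt hx, Real.sq_sqrt hy, Real.sqrt_nonneg x, Real.sqrt_nonneg y, mul_nonneg (Real.sqrt_nonneg x) (Real.sqrt_nonneg y)])
  have hs : Real.sqrt ((Real.sqrt x + Real.sqrt y) ^ 2) = Real.sqrt x + Real.sqrt y :=
    Real.sqrt_sq (by positivity)
  linarith

set_option maxHeartbeats 1000000 in
/-- The Dzhanibekov precession angle
`Δφ(c) = ∫_{−π/2}^{π/2} (1−b·cos²ψ)/√((a+b·cos²ψ)(c+b·cos²ψ)) dψ`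
tends to `+∞` as `c → 0⁺`. -/
theorem dzhanibekov_deltaPhi_tendsto_atTop (a b : ℝ)
    (ha : 0 < a) (hb0 : 0 < b) (hb1 : b < 1) :
    Tendsto
      (fun c : ℝ =>
        ∫ ψ in (-(π / 2))..(π / 2),
          (1 - b * Real.cos ψ ^ 2) /
            Real.sqrt ((a + b * Real.cos ψ ^ 2) * (c + b * Real.cos ψ ^ 2)))
      (nhdsWithin 0 (Set.Ioi 0)) atTop := by
  have hpi : (0:ℝ) < π := Real.pi_pos
  set K : ℝ := (1 - b) / Real.sqrt (a + b) with hK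
  have hab : (0:ℝ) < a + b := by linarith
  have hKpos : 0 < K := div_pos (by linarith) (Real.sqrt_pos.2 hab)
  have hsb : 0 < Real.sqrt b := Real.sqrt_pos.2 hb0
  set F : ℝ → ℝ := fun c => (K / Real.sqrt b) *
      (Real.log (Real.sqrt c + Real.sqrt b * π) - Real.log (Real.sqrt c)) with hF
  -- F tends to atTop
  have hFtendsto : Tendsto F (nhdsWithin 0 (Set.Ioi 0)) atTop := by
    have hsqrt : Tendsto (fun c : ℝ => Real.sqrt c) (nhdsWithin 0 (Set.Ioi 0))
        (nhdsWithin 0 (Set.Ioi 0)) := by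
      apply tendsto_nhdsWithin_of_tendsto_nhds_of_eventually_within
      · simpa using (Real.continuous_sqrt.tendsto 0).mono_left nhdsWithin_le_nhds
      · filter_upwards [self_mem_nhdsWithin] with c hc
        exact Real.sqrt_pos.2 hc
    have hlog : Tendsto (fun c : ℝ => Real.log (Real.sqrt c))
        (nhdsWithin 0 (Set.Ioi 0)) atBot := by
      refine (Real.tendsto_log_nhdsNE_zero.comp ?_)
      exact hsqrt.mono_right (nhdsWithin_mono 0 (fun x hx => ne_of_gt hx))
    have h1 : Tendsto (fun c : ℝ => Real.log (Real.sqrt c + Real.sqrt b * π))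
        (nhdsWithin 0 (Set.Ioi 0)) (nhds (Real.log (Real.sqrt b * π))) := by
      have hc : ContinuousAt (fun x : ℝ => Real.log (Real.sqrt x + Real.sqrt b * π)) 0 := by
        apply (Real.continuousAt_log (by positivity)).comp
        · exact (Real.continuous_sqrt.continuousAt (x := (0:ℝ))).add continuousAt_const
      simpa using hc.continuousWithinAt.tendsto
    have hsum : Tendsto (fun c : ℝ =>
        Real.log (Real.sqrt c + Real.sqrt b * π) - Real.log (Real.sqrt c))
        (nhdsWithin 0 (Set.Ioi 0)) atTop :=
      by simpa [sub_eq_add_neg] using h1.add_atTop (tendsto_neg_atTop_iff.mpr hlog)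
    exact hsum.const_mul_atTop (div_pos hKpos hsb)
  refine tendsto_atTop_mono' _ ?_ hFtendsto
  filter_upwards [self_mem_nhdsWithin] with c hc
  have hc' : (0:ℝ) < c := hc
  have hsc : 0 ≤ Real.sqrt c := Real.sqrt_nonneg c
  -- the lower-bound function
  set g : ℝ → ℝ := fun ψ => K / (Real.sqrt c + Real.sqrt b * (π / 2 - ψ)) with hg
  -- denominator positivity on the interval
  have hden : ∀ ψ ∈ Set.uIcc (-(π/2)) (π/2),
      0 < Real.sqrt c + Real.sqrt b * (π / 2 - ψ) := by
    intro ψ hψ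
    rw [Set.uIcc_of_le (by linarith)] at hψ
    have : 0 ≤ π / 2 - ψ := by linarith [hψ.2]
    have := Real.sqrt_pos.2 hc'
    positivity
  -- continuity of g on the interval
  have hgcont : ContinuousOn g (Set.uIcc (-(π/2)) (π/2)) := by
    apply ContinuousOn.div continuousOn_const
    · fun_prop
    · intro ψ hψ; exact ne_of_gt (hden ψ hψ)
  have hgint : IntervalIntegrable g volume (-(π/2)) (π/2) :=
    hgcont.intervalIntegrable
  -- compute ∫ g = F c via FTC
  have hintg : (∫ ψ in (-(π/2))..(π/2), g ψ) = F c := by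
    have hderiv : ∀ ψ ∈ Set.uIcc (-(π/2)) (π/2),
        HasDerivAt (fun ψ => -(K / Real.sqrt b) *
          Real.log (Real.sqrt c + Real.sqrt b * (π / 2 - ψ))) (g ψ) ψ := by
      intro ψ hψ
      have hu : HasDerivAt (fun ψ : ℝ => Real.sqrt c + Real.sqrt b * (π / 2 - ψ))
          (-Real.sqrt b) ψ := by
        have h1 : HasDerivAt (fun ψ : ℝ => π / 2 - ψ) (-1) ψ := by
          simpa using (hasDerivAt_id ψ).const_sub (π/2)
        have := (h1.const_mul (Real.sqrt b)).const_add (Real.sqrt c)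
        simpa using this
      have hu0 : Real.sqrt c + Real.sqrt b * (π / 2 - ψ) ≠ 0 := ne_of_gt (hden ψ hψ)
      have hlog := (hu.log hu0).const_mul (-(K / Real.sqrt b))
      refine hlog.congr_deriv ?_
      rw [hg]
      rw [neg_div, neg_mul_neg, div_mul_div_comm, mul_comm K (Real.sqrt b),
        mul_div_mul_left _ _ (ne_of_gt hsb)]
    rw [intervalIntegral.integral_eq_sub_of_hasDerivAt hderiv hgint]
    have e1 : Real.sqrt c + Real.sqrt b * (π / 2 - π / 2) = Real.sqrt c := by ring_nf
    have e2 : Real.sqrt c + Real.sqrt b * (π / 2 - -(π / 2)) =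
        Real.sqrt c + Real.sqrt b * π := by ring_nf
    rw [e1, e2, hF]
    ring
  -- integrability of the integrand
  have hfcont : Continuous (fun ψ =>
      (1 - b * Real.cos ψ ^ 2) /
        Real.sqrt ((a + b * Real.cos ψ ^ 2) * (c + b * Real.cos ψ ^ 2))) := by
    apply Continuous.div
    · fun_prop
    · fun_prop
    · intro ψ
      have h1 : 0 < a + b * Real.cos ψ ^ 2 := by positivity
      have h2 : 0 < c + b * Real.cos ψ ^ 2 := by positivity
      exact ne_of_gt (Real.sqrt_pos.2 (mul_pos h1 h2))
  have hfint : IntervalIntegrable (fun ψ =>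
      (1 - b * Real.cos ψ ^ 2) /
        Real.sqrt ((a + b * Real.cos ψ ^ 2) * (c + b * Real.cos ψ ^ 2)))
      volume (-(π/2)) (π/2) := hfcont.intervalIntegrable _ _
  -- pointwise bound
  have hptwise : ∀ ψ ∈ Set.Icc (-(π/2)) (π/2), g ψ ≤
      (1 - b * Real.cos ψ ^ 2) /
        Real.sqrt ((a + b * Real.cos ψ ^ 2) * (c + b * Real.cos ψ ^ 2)) := by
    intro ψ hψ
    set t := Real.cos ψ with ht
    have ht0 : 0 ≤ t := Real.cos_nonneg_of_mem_Icc (by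
      constructor <;> [linarith [hψ.1]; linarith [hψ.2]])
    have ht1 : t ≤ 1 := Real.cos_le_one ψ
    have hsin : t ≤ π / 2 - ψ := by
      have : Real.sin (π / 2 - ψ) ≤ π / 2 - ψ := Real.sin_le (by linarith [hψ.2])
      rwa [Real.sin_pi_div_two_sub] at this
    have h1 : 0 < a + b * t ^ 2 := by positivity
    have h2 : 0 < c + b * t ^ 2 := by positivity
    have ht2 : t ^ 2 ≤ 1 := by nlinarith
    have hbt2 : b * t ^ 2 ≤ b := by nlinarith [mul_le_mul_of_nonneg_left ht2 hb0.le]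
    -- denominator bound
    have hd1 : Real.sqrt (a + b * t ^ 2) ≤ Real.sqrt (a + b) :=
      Real.sqrt_le_sqrt (by linarith)
    have hd2 : Real.sqrt (c + b * t ^ 2) ≤
        Real.sqrt c + Real.sqrt b * (π / 2 - ψ) := by
      have h := aux_sqrt_add_le c (b * t ^ 2) (le_of_lt hc') (by positivity)
      have hbt : Real.sqrt (b * t ^ 2) = Real.sqrt b * t := by
        rw [Real.sqrt_mul (le_of_lt hb0), Real.sqrt_sq ht0]
      have : Real.sqrt b * t ≤ Real.sqrt b * (π / 2 - ψ) :=
        mul_le_mul_of_nonneg_left hsin (le_of_lt hsb)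
      linarith [h, hbt ▸ h]
    have hdenpos : 0 < Real.sqrt ((a + b * t ^ 2) * (c + b * t ^ 2)) :=
      Real.sqrt_pos.2 (mul_pos h1 h2)
    have hsplit : Real.sqrt ((a + b * t ^ 2) * (c + b * t ^ 2)) =
        Real.sqrt (a + b * t ^ 2) * Real.sqrt (c + b * t ^ 2) :=
      Real.sqrt_mul (le_of_lt h1) _
    have hdenle : Real.sqrt ((a + b * t ^ 2) * (c + b * t ^ 2)) ≤
        Real.sqrt (a + b) * (Real.sqrt c + Real.sqrt b * (π / 2 - ψ)) := by
      rw [hsplit]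
      exact mul_le_mul hd1 hd2 (Real.sqrt_nonneg _) (Real.sqrt_nonneg _)
    have hnum : 1 - b ≤ 1 - b * t ^ 2 := by linarith
    have hgalt : g ψ = (1 - b) /
        (Real.sqrt (a + b) * (Real.sqrt c + Real.sqrt b * (π / 2 - ψ))) := by
      simp only [hg, hK, div_div]
    rw [hgalt]
    exact div_le_div₀ (by linarith) hnum hdenpos hdenle
  calc F c = ∫ ψ in (-(π/2))..(π/2), g ψ := hintg.symm
    _ ≤ _ := intervalIntegral.integral_mono_on (by linarith) hgint hfint hptwise
end

section
/- Let J > 0 and 0 < I_z < I_y < I_x be real constants, and set a = I_y/I_z − 1 and b = 1 − I_y/I_x. Let θ, ψ : ℝ → ℝ be differentiable functions satisfying Euler's equations θ'(t) = J(1/I_y − 1/I_x)·sin θ(t)·sin ψ(t)·cos ψ(t) and ψ'(t) = J(1/I_z − sin²ψ(t)/I_y − cos²ψ(t)/I_x)·cos θ(t) for all t. Then the function t ↦ a − sin²θ(t)·(a + b cos²ψ(t)) is constant on ℝ. -/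
open Real

/-- Conservation law from Euler's equations: along any solution `(θ, ψ)` of
Euler's equations for the free rigid body, the quantity
`a − sin²θ·(a + b·cos²ψ)` is constant. -/
theorem euler_conserved_quantity (J Ix Iy Iz a b : ℝ)
    (hJ : 0 < J) (hz : 0 < Iz) (hzy : Iz < Iy) (hyx : Iy < Ix)
    (ha : a = Iy / Iz - 1) (hb : b = 1 - Iy / Ix)
    (θ ψ : ℝ → ℝ) (hθ : Differentiable ℝ θ) (hψ : Differentiable ℝ ψ)
    (hθ' : ∀ t, deriv θ t =
      J * (1 / Iy - 1 / Ix) * Real.sin (θ t) * Real.sin (ψ t) * Real.cos (ψ t))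
    (hψ' : ∀ t, deriv ψ t =
      J * (1 / Iz - Real.sin (ψ t) ^ 2 / Iy - Real.cos (ψ t) ^ 2 / Ix) *
        Real.cos (θ t)) :
    ∀ s t : ℝ,
      a - Real.sin (θ s) ^ 2 * (a + b * Real.cos (ψ s) ^ 2) =
        a - Real.sin (θ t) ^ 2 * (a + b * Real.cos (ψ t) ^ 2) := by
  have hy : 0 < Iy := hz.trans hzy
  have hx : 0 < Ix := hy.trans hyx
  have key : ∀ t, HasDerivAt
      (fun t => a - Real.sin (θ t) ^ 2 * (a + b * Real.cos (ψ t) ^ 2)) 0 t := by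
    intro t
    have hθt : HasDerivAt θ
        (J * (1 / Iy - 1 / Ix) * Real.sin (θ t) * Real.sin (ψ t) * Real.cos (ψ t)) t := by
      rw [← hθ' t]; exact (hθ t).hasDerivAt
    have hψt : HasDerivAt ψ
        (J * (1 / Iz - Real.sin (ψ t) ^ 2 / Iy - Real.cos (ψ t) ^ 2 / Ix) *
          Real.cos (θ t)) t := by
      rw [← hψ' t]; exact (hψ t).hasDerivAt
    have h1 := (((Real.hasDerivAt_sin (θ t)).comp t hθt).pow 2)
    have h2 := (((Real.hasDerivAt_cos (ψ t)).comp t hψt).pow 2)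
    have h3 := ((h2.const_mul b).const_add a)
    have h4 := (h1.mul h3).const_sub a
    convert h4 using 1
    case e'_4 => rfl
    case e'_5 => rfl
    case e'_8 => rfl
    have hp : Real.sin (ψ t) ^ 2 = 1 - Real.cos (ψ t) ^ 2 := by
      nlinarith [Real.sin_sq_add_cos_sq (ψ t)]
    rw [hp]
    subst ha hb
    simp only [Function.comp_apply, Pi.pow_apply]
    field_simp
    ring
  intro s t
  have := is_const_of_deriv_eq_zero (f := fun t =>
      a - Real.sin (θ t) ^ 2 * (a + b * Real.cos (ψ t) ^ 2))
    (fun x => (key x).differentiableAt) (fun x => (key x).deriv) s t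
  simpa using this
end
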